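/- arXiv:0905.4511 — 7 statements merged into one kernel-verified Lean document; each statement's English description precedes it below -/
import Mathlib

section
/- Let A ⊆ ℕ^n be a finite set, N = conv(A + ℝ≥0^n) the Newton polyhedron, and for a ∈ A define the ideal tangent cone IT_a = ℕ-span of {a' - a : a' ∈ A, a' ≠ a} ∪ {e_1,...,e_n} in ℤ^n. Then IT_a is pointed (IT_a ∩ (-IT_a) = {0}) if and only if a is a vertex (extreme point) of N. -/
open Pointwise

namespace Stmt2Aux

variable {n : ℕ}

/-- Coordinatewise cast `ℤ → ℝ` as an additive monoid hom. -/
def cR (n : ℕ) : (Fin n → ℤ) →+ (Fin n → ℝ) where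
  toFun v := fun i => (v i : ℝ)
  map_zero' := by funext i; simp
  map_add' u v := by funext i; push_cast; simp

lemma cR_apply (v : Fin n → ℤ) (i : Fin n) : cR n v i = (v i : ℝ) := rfl

lemma cR_injective : Function.Injective (cR n) := by
  intro u v h
  funext i
  have h2 : (u i : ℝ) = (v i : ℝ) := congrFun h i
  exact_mod_cast h2

lemma cR_single (j : Fin n) (m : ℤ) : cR n (Pi.single j m) = Pi.single j (m : ℝ) := by
  funext i
  by_cases h : i = j
  · subst h; simp [cR_apply]
  · simp [cR_apply, Pi.single_apply, h]

lemma exists_rat_retraction : ∃ π : ℝ →ₗ[ℚ] ℚ, π 1 = 1 := by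
  obtain ⟨q, hq⟩ := Submodule.exists_isCompl (ℚ ∙ (1 : ℝ))
  let e := LinearEquiv.toSpanNonzeroSingleton ℚ ℝ 1 one_ne_zero
  refine ⟨e.symm.toLinearMap ∘ₗ Submodule.linearProjOfIsCompl _ q hq, ?_⟩
  have h1 : Submodule.linearProjOfIsCompl _ q hq (1 : ℝ)
      = ⟨1, Submodule.mem_span_singleton_self 1⟩ := by
    exact Submodule.linearProjOfIsCompl_apply_left hq ⟨1, Submodule.mem_span_singleton_self 1⟩
  have he : e 1 = ⟨1, Submodule.mem_span_singleton_self 1⟩ := by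
    ext
    simp [e, LinearEquiv.toSpanNonzeroSingleton]
  simp [h1, ← he]

lemma convex_list_avg {E : Type*} [AddCommGroup E] [Module ℝ E] {s : Set E} (hs : Convex ℝ s) :
    ∀ l : List E, l ≠ [] → (∀ p ∈ l, p ∈ s) → (l.length : ℝ)⁻¹ • l.sum ∈ s := by
  intro l
  induction l with
  | nil => simp
  | cons p l ih =>
    intro _ hmem
    rcases eq_or_ne l [] with rfl | hl
    · simpa using hmem p (by simp)
    · have hk : (0 : ℝ) < l.length := by
        have := List.length_pos_iff.2 hl
        exact_mod_cast this
      have hps : p ∈ s := hmem p (by simp)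
      have hrs : (l.length : ℝ)⁻¹ • l.sum ∈ s := ih hl fun q hq => hmem q (by simp [hq])
      have key := hs hps hrs (a := ((l.length : ℝ) + 1)⁻¹)
        (b := (l.length : ℝ) * ((l.length : ℝ) + 1)⁻¹)
        (by positivity) (by positivity) (by field_simp; ring)
      have heq : ((l.length : ℝ) * ((l.length : ℝ) + 1)⁻¹) • (l.length : ℝ)⁻¹ • l.sum
          = ((l.length : ℝ) + 1)⁻¹ • l.sum := by
        rw [smul_smul]
        congr 1
        field_simp
      rw [heq] at key
      simpa [List.sum_cons, smul_add, add_comm] using key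

lemma key_rat (S : Set (Fin n → ℤ)) (hS0 : ∀ g ∈ S, g ≠ 0)
    (h0 : (0 : Fin n → ℝ) ∈ convexHull ℝ (cR n '' S)) :
    ∃ x : Fin n → ℤ, x ≠ 0 ∧ x ∈ AddSubmonoid.closure S ∧ -x ∈ AddSubmonoid.closure S := by
  classical
  obtain ⟨ι, hι, z, w, hrange, hai, hwpos, hw1, hsum⟩ :=
    eq_pos_convex_span_of_mem_convexHull h0
  letI := hι
  choose g hgS hgz using fun i : ι =>
    (Set.mem_image _ _ _).1 (hrange (Set.mem_range_self i))
  obtain ⟨π, hπ1⟩ := exists_rat_retraction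
  set w' : ι → ℚ := fun i => π (w i) with hw'def
  have hw'1 : ∑ i, w' i = 1 := by
    have h1 : ∑ i, w' i = π (∑ i, w i) := (map_sum π w Finset.univ).symm
    rw [h1, hw1, hπ1]
  have hzj : ∀ (i : ι) (j : Fin n), z i j = ((g i j : ℚ) : ℝ) := by
    intro i j
    rw [← hgz i]
    simp [cR_apply]
  have hcoordQ : ∀ j : Fin n, ∑ i, (g i j : ℚ) * w' i = 0 := by
    intro j
    have h0' : ∑ i, w i * z i j = 0 := by
      have := congrFun hsum j
      simpa [Finset.sum_apply] using this
    have h1 : ∑ i, ((g i j : ℚ)) • w i = 0 := by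
      rw [← h0']
      refine Finset.sum_congr rfl fun i _ => ?_
      rw [Rat.smul_def, mul_comm, hzj i j]
    have h2 := congrArg π h1
    rw [map_sum, map_zero] at h2
    rw [← h2]
    refine Finset.sum_congr rfl fun i _ => ?_
    rw [map_smul, smul_eq_mul]
  have hw''1 : ∑ i, ((w' i : ℚ) : ℝ) = 1 := by
    exact_mod_cast congrArg (fun q : ℚ => (q : ℝ)) hw'1
  have hsum'' : ∑ i, ((w' i : ℚ) : ℝ) • z i = 0 := by
    funext j
    have hQ := hcoordQ j
    have h3 : ∑ i, ((w' i : ℚ) : ℝ) * z i j = ((∑ i, (g i j : ℚ) * w' i : ℚ) : ℝ) := by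
      push_cast
      refine Finset.sum_congr rfl fun i _ => ?_
      rw [hzj i j]
      push_cast
      ring
    simpa [Finset.sum_apply, hQ] using h3
  have huniq : (fun i => ((w' i : ℚ) : ℝ)) = w := by
    have h1 : Finset.univ.affineCombination ℝ z (fun i => ((w' i : ℚ) : ℝ)) =
        Finset.univ.affineCombination ℝ z w := by
      rw [Finset.univ.affineCombination_eq_linear_combination z _ hw''1,
        Finset.univ.affineCombination_eq_linear_combination z w hw1, hsum'', hsum]
    exact (affineIndependent_iff_eq_of_fintype_affineCombination_eq ℝ z).1 hai _ w hw''1 hw1 h1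
  have hw'pos : ∀ i, 0 < w' i := by
    intro i
    have h : ((w' i : ℚ) : ℝ) = w i := congrFun huniq i
    have h2 : (0 : ℝ) < ((w' i : ℚ) : ℝ) := h ▸ hwpos i
    exact_mod_cast h2
  set d : ℕ := ∏ i, (w' i).den with hd
  have hdpos : 0 < d := Finset.prod_pos fun i _ => (w' i).den_pos
  have hden_dvd : ∀ i : ι, (w' i).den ∣ d := fun i =>
    Finset.dvd_prod_of_mem _ (Finset.mem_univ i)
  set mZ : ι → ℤ := fun i => (w' i).num * ((d / (w' i).den : ℕ) : ℤ) with hmZdef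
  have hmZQ : ∀ i, ((mZ i : ℚ)) = w' i * (d : ℚ) := by
    intro i
    have h1 : (d : ℚ) = ((w' i).den : ℚ) * ((d / (w' i).den : ℕ) : ℚ) := by
      rw [← Nat.cast_mul, Nat.mul_div_cancel' (hden_dvd i)]
    show ((((w' i).num * ((d / (w' i).den : ℕ) : ℤ)) : ℤ) : ℚ) = _
    rw [Int.cast_mul, Int.cast_natCast, h1, ← mul_assoc, Rat.mul_den_eq_num]
  have hmZpos : ∀ i, 0 < mZ i := by
    intro i
    have h2 : (0:ℚ) < (mZ i : ℚ) := by
      rw [hmZQ i]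
      exact mul_pos (hw'pos i) (by exact_mod_cast hdpos)
    exact_mod_cast h2
  set m : ι → ℕ := fun i => (mZ i).toNat with hmdef
  have hmZm : ∀ i, ((m i : ℤ)) = mZ i := fun i => Int.toNat_of_nonneg (hmZpos i).le
  have hmpos : ∀ i, 0 < m i := by
    intro i
    have h1 := hmZpos i
    have h2 := hmZm i
    omega
  have hmQ : ∀ i, ((m i : ℚ)) = w' i * (d : ℚ) := by
    intro i
    rw [← hmZQ i, ← hmZm i]
    push_cast
    ring
  have hsumZ : ∑ i, m i • g i = (0 : Fin n → ℤ) := by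
    apply cR_injective
    rw [map_sum, map_zero]
    have hterm : ∀ i : ι, cR n (m i • g i) = (d : ℝ) • (((w' i : ℚ) : ℝ) • z i) := by
      intro i
      rw [map_nsmul, hgz i, ← Nat.cast_smul_eq_nsmul ℝ, smul_smul]
      congr 1
      have h5 : ((m i : ℝ)) = (((m i : ℚ) : ℝ)) := by push_cast; ring
      rw [h5, hmQ i]
      push_cast
      ring
    rw [Finset.sum_congr rfl fun i _ => hterm i, ← Finset.smul_sum, hsum'', smul_zero]
  rcases isEmpty_or_nonempty ι with hE | hNE
  · exfalso
    rw [Finset.univ_eq_empty, Finset.sum_empty] at hw1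
    exact one_ne_zero hw1.symm
  obtain ⟨i₀⟩ := hNE
  refine ⟨m i₀ • g i₀, ?_, ?_, ?_⟩
  · obtain ⟨j, hj⟩ : ∃ j, g i₀ j ≠ 0 := by
      by_contra h
      push_neg at h
      exact hS0 _ (hgS i₀) (funext h)
    intro hzero
    have hz := congrFun hzero j
    simp only [Pi.smul_apply, Pi.zero_apply] at hz
    have h4 : (m i₀ : ℤ) * g i₀ j = 0 := by rwa [nsmul_eq_mul] at hz
    rcases mul_eq_zero.1 h4 with h | h
    · exact absurd h (by exact_mod_cast (hmpos i₀).ne')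
    · exact hj h
  · exact nsmul_mem (AddSubmonoid.subset_closure (hgS i₀)) _
  · have h := Finset.sum_erase_add Finset.univ (fun i => m i • g i) (Finset.mem_univ i₀)
    rw [hsumZ] at h
    rw [← eq_neg_of_add_eq_zero_left h]
    exact AddSubmonoid.sum_mem _ fun i _ =>
      nsmul_mem (AddSubmonoid.subset_closure (hgS i)) _

lemma map_sub_sum (B : List (Fin n → ℤ)) (a : Fin n → ℤ) :
    (B.map (· - a)).sum = B.sum - B.length • a := by
  induction B with
  | nil => simp
  | cons b B ih =>
    rw [List.map_cons, List.sum_cons, List.sum_cons, ih, List.length_cons, succ_nsmul]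
    abel

lemma list_decomp (A : Finset (Fin n → ℤ)) (a : Fin n → ℤ) :
    ∀ L : List (Fin n → ℤ),
      (∀ g ∈ L, g ∈ ({v | ∃ a' ∈ A, a' ≠ a ∧ v = a' - a} ∪
        Set.range fun i => Pi.single i (1 : ℤ) : Set (Fin n → ℤ))) →
      ∃ (B : List (Fin n → ℤ)) (u : Fin n → ℤ), (∀ b ∈ B, b ∈ A ∧ b ≠ a) ∧ (∀ i, 0 ≤ u i) ∧
        L.sum = (B.map (· - a)).sum + u := by
  intro L
  induction L with
  | nil => exact fun _ => ⟨[], 0, by simp, by simp, by simp⟩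
  | cons gL L ih =>
    intro hmem
    obtain ⟨B, u, hB, hu, hsum⟩ := ih fun g hg => hmem g (by simp [hg])
    rcases hmem gL (by simp) with h | h
    · obtain ⟨a', ha'A, ha'ne, rfl⟩ := h
      refine ⟨a' :: B, u, ?_, hu, ?_⟩
      · rintro b hb
        rcases List.mem_cons.1 hb with rfl | hb
        · exact ⟨ha'A, ha'ne⟩
        · exact hB b hb
      · simp [hsum]
        abel
    · obtain ⟨i, rfl⟩ := h
      refine ⟨B, u + Pi.single i 1, hB, ?_, ?_⟩
      · intro j
        have hj := hu j
        rcases eq_or_ne j i with rfl | hji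
        · simp only [Pi.add_apply, Pi.single_eq_same]
          omega
        · simpa [Pi.single_apply, hji] using hj
      · simp [hsum]
        abel


lemma dir1 (A : Finset (Fin n → ℤ)) (a : Fin n → ℤ) (ha : a ∈ A)
    (hext : (cR n a) ∈ Set.extremePoints ℝ (convexHull ℝ
      ((cR n) '' (A : Set (Fin n → ℤ)) + {x : Fin n → ℝ | ∀ i, 0 ≤ x i}))) :
    ∀ x ∈ AddSubmonoid.closure ({v | ∃ a' ∈ A, a' ≠ a ∧ v = a' - a} ∪
        Set.range fun i => Pi.single i (1 : ℤ)),
      -x ∈ AddSubmonoid.closure ({v | ∃ a' ∈ A, a' ≠ a ∧ v = a' - a} ∪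
        Set.range fun i => Pi.single i (1 : ℤ)) → x = 0 := by
  intro x hx hnx
  obtain ⟨L₁, hL₁, hL₁s⟩ := AddSubmonoid.exists_list_of_mem_closure hx
  obtain ⟨L₂, hL₂, hL₂s⟩ := AddSubmonoid.exists_list_of_mem_closure hnx
  obtain ⟨B₁, u₁, hB₁, hu₁, hs₁⟩ := list_decomp A a L₁ hL₁
  obtain ⟨B₂, u₂, hB₂, hu₂, hs₂⟩ := list_decomp A a L₂ hL₂
  by_cases hBB : B₁ = [] ∧ B₂ = []
  · rw [hBB.1] at hs₁
    rw [hBB.2] at hs₂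
    simp only [List.map_nil, List.sum_nil, zero_add] at hs₁ hs₂
    funext i
    have e1 : x i = u₁ i := by rw [← hL₁s, hs₁]
    have e2 : -x i = u₂ i := by
      have := congrFun (hL₂s.symm.trans hs₂) i
      simpa using this
    have h1 := hu₁ i
    have h2 := hu₂ i
    simp only [Pi.zero_apply]
    omega
  · exfalso
    set S0 : Set (Fin n → ℝ) :=
      (cR n) '' (A : Set (Fin n → ℤ)) + {x : Fin n → ℝ | ∀ i, 0 ≤ x i} with hS0def
    set B : List (Fin n → ℤ) := B₁ ++ B₂ with hBdef
    have hBne : B ≠ [] := by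
      rcases not_and_or.1 hBB with h | h <;> simp [hBdef] <;> tauto
    set u : Fin n → ℤ := u₁ + u₂ with hudef
    have hu : ∀ i, 0 ≤ u i := fun i => add_nonneg (hu₁ i) (hu₂ i)
    have hBmem : ∀ b ∈ B, b ∈ A ∧ b ≠ a := by
      intro b hb
      rcases List.mem_append.1 hb with h | h
      exacts [hB₁ b h, hB₂ b h]
    have hzero : (B.map (· - a)).sum + u = 0 := by
      have h1 : L₁.sum + L₂.sum = x + -x := by rw [hL₁s, hL₂s]
      rw [hs₁, hs₂] at h1
      rw [hBdef, hudef, List.map_append, List.sum_append]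
      rw [add_neg_cancel] at h1
      rw [← h1]
      abel
    have hk : B.length ≠ 0 := by simpa using hBne
    have hsum_eq : B.sum + u = B.length • a := by
      rw [map_sub_sum] at hzero
      rw [sub_add_eq_add_sub, sub_eq_zero] at hzero
      exact hzero
    have hb₀B : B.head hBne ∈ B := List.head_mem hBne
    set b₀ : Fin n → ℤ := B.head hBne with hb₀def
    obtain ⟨hb₀A, hb₀ne⟩ := hBmem b₀ hb₀B
    have hcons : b₀ :: B.tail = B := List.cons_head_tail hBne
    have htail_len : B.tail.length + 1 = B.length := by
      conv_rhs => rw [← hcons]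
      simp
    have hsum_split : b₀ + B.tail.sum = B.sum := by
      conv_rhs => rw [← hcons]
      simp
    set k : ℕ := B.length with hkdef
    set LP : List (Fin n → ℝ) := B.tail.map (cR n) ++ [cR n a + cR n u] with hLPdef
    have hLP_len : LP.length = k := by
      simp only [hLPdef, List.length_append, List.length_map, List.length_cons,
        List.length_nil]
      omega
    have hLP_ne : LP ≠ [] := by simp [hLPdef]
    have horthant : ∀ w : Fin n → ℤ, (∀ i, 0 ≤ w i) →
        cR n w ∈ {x : Fin n → ℝ | ∀ i, 0 ≤ x i} := by
      intro w hw i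
      have := hw i
      rw [cR_apply]
      exact_mod_cast this
    have hmemN : ∀ b ∈ (A : Set (Fin n → ℤ)), ∀ w : Fin n → ℤ, (∀ i, 0 ≤ w i) →
        cR n b + cR n w ∈ convexHull ℝ S0 := by
      intro b hb w hw
      exact subset_convexHull ℝ S0
        (Set.add_mem_add (Set.mem_image_of_mem _ hb) (horthant w hw))
    have hLP_mem : ∀ p ∈ LP, p ∈ convexHull ℝ S0 := by
      intro p hp
      rcases List.mem_append.1 hp with h | h
      · obtain ⟨b, hb, rfl⟩ := List.mem_map.1 h
        have hbA : b ∈ A := (hBmem b (List.mem_of_mem_tail hb)).1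
        have := hmemN b hbA 0 (fun i => le_refl 0)
        simpa using this
      · rw [List.mem_singleton.1 h]
        exact hmemN a ha u hu
    have hcastZ : b₀ + (B.tail.sum + (a + u)) = (k + 1) • a := by
      have h2 : (b₀ + B.tail.sum + u) + a = k • a + a := by
        rw [hsum_split, hsum_eq]
      rw [succ_nsmul]
      rw [← h2]
      abel
    have hcast : cR n b₀ + LP.sum = (((k : ℝ)) + 1) • cR n a := by
      have h3 := congrArg (cR n) hcastZ
      rw [map_add, map_add, map_add, map_nsmul] at h3
      have h4 : LP.sum = cR n B.tail.sum + (cR n a + cR n u) := by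
        rw [hLPdef, List.sum_append, List.sum_cons, List.sum_nil, add_zero,
          ← map_list_sum]
      rw [h4, h3, ← Nat.cast_smul_eq_nsmul ℝ]
      push_cast
      ring_nf
    have hkR : (0 : ℝ) < (k : ℝ) := by
      have : 0 < k := Nat.pos_of_ne_zero hk
      exact_mod_cast this
    set r : Fin n → ℝ := ((k : ℝ))⁻¹ • LP.sum with hrdef
    have hrN : r ∈ convexHull ℝ S0 := by
      have := convex_list_avg (convex_convexHull ℝ S0) LP hLP_ne hLP_mem
      rwa [hLP_len] at this
    have hb₀N : cR n b₀ ∈ convexHull ℝ S0 := by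
      have := hmemN b₀ hb₀A 0 (fun i => le_refl 0)
      simpa using this
    have hseg : cR n a ∈ openSegment ℝ (cR n b₀) r := by
      refine ⟨((k : ℝ) + 1)⁻¹, (k : ℝ) * ((k : ℝ) + 1)⁻¹, by positivity, by positivity,
        by field_simp; ring, ?_⟩
      have h5 : ((k : ℝ) * ((k : ℝ) + 1)⁻¹) • r = ((k : ℝ) + 1)⁻¹ • LP.sum := by
        rw [hrdef, smul_smul]
        congr 1
        field_simp
      rw [h5, ← smul_add, hcast, smul_smul]
      rw [inv_mul_cancel₀ (by positivity), one_smul]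
    have hfin := ((mem_extremePoints).1 hext).2 (cR n b₀) hb₀N r hrN hseg
    exact hb₀ne (cR_injective hfin.1)


lemma dir2 (A : Finset (Fin n → ℤ)) (a : Fin n → ℤ) (ha : a ∈ A)
    (hpt : ∀ x ∈ AddSubmonoid.closure ({v | ∃ a' ∈ A, a' ≠ a ∧ v = a' - a} ∪
        Set.range fun i => Pi.single i (1 : ℤ)),
      -x ∈ AddSubmonoid.closure ({v | ∃ a' ∈ A, a' ≠ a ∧ v = a' - a} ∪
        Set.range fun i => Pi.single i (1 : ℤ)) → x = 0) :
    (cR n a) ∈ Set.extremePoints ℝ (convexHull ℝ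
      ((cR n) '' (A : Set (Fin n → ℤ)) + {x : Fin n → ℝ | ∀ i, 0 ≤ x i})) := by
  classical
  set S : Set (Fin n → ℤ) := {v | ∃ a' ∈ A, a' ≠ a ∧ v = a' - a} ∪
    Set.range fun i => Pi.single i (1 : ℤ) with hSdef
  set S0 : Set (Fin n → ℝ) := (cR n) '' (A : Set (Fin n → ℤ)) +
    {x : Fin n → ℝ | ∀ i, 0 ≤ x i} with hS0def
  have horthant0 : (0 : Fin n → ℝ) ∈ {x : Fin n → ℝ | ∀ i, 0 ≤ x i} := fun i => le_refl 0
  have haN : cR n a ∈ convexHull ℝ S0 := by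
    apply subset_convexHull ℝ S0
    have h1 := Set.add_mem_add (Set.mem_image_of_mem (cR n) (Finset.mem_coe.2 ha)) horthant0
    simpa [hS0def] using h1
  rw [mem_extremePoints]
  refine ⟨haN, ?_⟩
  intro x₁ hx₁ x₂ hx₂ hseg
  by_contra hcon
  rw [not_and_or] at hcon
  obtain ⟨θ₁, θ₂, hθ₁, hθ₂, hθs, hθeq⟩ := hseg
  obtain ⟨ι₁, hι₁, z₁, w₁, hr₁, hai₁, hw₁pos, hw₁1, hz₁⟩ :=
    eq_pos_convex_span_of_mem_convexHull hx₁
  obtain ⟨ι₂, hι₂, z₂, w₂, hr₂, hai₂, hw₂pos, hw₂1, hz₂⟩ :=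
    eq_pos_convex_span_of_mem_convexHull hx₂
  letI := hι₁
  letI := hι₂
  have hdec : ∀ {ι : Type} (z : ι → Fin n → ℝ), Set.range z ⊆ S0 →
      ∀ i, ∃ b, b ∈ A ∧ ∃ u : Fin n → ℝ, (∀ j, 0 ≤ u j) ∧ z i = cR n b + u := by
    intro ι z hr i
    have h1 : z i ∈ S0 := hr (Set.mem_range_self i)
    rw [hS0def] at h1
    obtain ⟨p, hp, q, hq, hpq⟩ := Set.mem_add.1 h1
    obtain ⟨b, hbA, rfl⟩ := hp
    exact ⟨b, hbA, q, hq, hpq.symm⟩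
  choose b₁ hb₁A u₁ hu₁ hz₁eq using hdec z₁ hr₁
  choose b₂ hb₂A u₂ hu₂ hz₂eq using hdec z₂ hr₂
  have hz₁j : ∀ i j, z₁ i j = ((b₁ i j : ℝ)) + u₁ i j := by
    intro i j
    rw [hz₁eq i]
    rfl
  have hz₂j : ∀ i j, z₂ i j = ((b₂ i j : ℝ)) + u₂ i j := by
    intro i j
    rw [hz₂eq i]
    rfl
  have hx₁j : ∀ j, ∑ i, w₁ i * z₁ i j = x₁ j := by
    intro j
    have h1 := congrFun hz₁ j
    simpa [Finset.sum_apply] using h1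
  have hx₂j : ∀ j, ∑ i, w₂ i * z₂ i j = x₂ j := by
    intro j
    have h1 := congrFun hz₂ j
    simpa [Finset.sum_apply] using h1
  have haj : ∀ j, θ₁ * x₁ j + θ₂ * x₂ j = ((a j : ℝ)) := by
    intro j
    have h1 := congrFun hθeq j
    simpa [cR_apply] using h1
  set W₁ : ι₁ → ℝ := fun i => if b₁ i = a then 0 else θ₁ * w₁ i with hW₁def
  set W₂ : ι₂ → ℝ := fun i => if b₂ i = a then 0 else θ₂ * w₂ i with hW₂def
  set v : Fin n → ℝ := θ₁ • (∑ i, w₁ i • u₁ i) + θ₂ • (∑ i, w₂ i • u₂ i) with hvdef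
  have hvj : ∀ j, v j = θ₁ * (∑ i, w₁ i * u₁ i j) + θ₂ * (∑ i, w₂ i * u₂ i j) := by
    intro j
    rw [hvdef]
    simp [Finset.sum_apply]
  have hv0 : ∀ j, 0 ≤ v j := by
    intro j
    rw [hvj j]
    have h1 : 0 ≤ ∑ i, w₁ i * u₁ i j :=
      Finset.sum_nonneg fun i _ => mul_nonneg (hw₁pos i).le (hu₁ i j)
    have h2 : 0 ≤ ∑ i, w₂ i * u₂ i j :=
      Finset.sum_nonneg fun i _ => mul_nonneg (hw₂pos i).le (hu₂ i j)
    exact add_nonneg (mul_nonneg hθ₁.le h1) (mul_nonneg hθ₂.le h2)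
  set Z : ((ι₁ ⊕ ι₂) ⊕ Fin n) → Fin n → ℝ :=
    Sum.elim (Sum.elim (fun i => cR n (b₁ i - a)) (fun i => cR n (b₂ i - a)))
      (fun j => cR n (Pi.single j 1)) with hZdef
  set W : ((ι₁ ⊕ ι₂) ⊕ Fin n) → ℝ := Sum.elim (Sum.elim W₁ W₂) v with hWdef
  have hW0 : ∀ i, 0 ≤ W i := by
    rintro ((i | i) | j)
    · simp only [hWdef, Sum.elim_inl, hW₁def]
      split
      · exact le_refl 0
      · exact mul_nonneg hθ₁.le (hw₁pos i).le
    · simp only [hWdef, Sum.elim_inl, Sum.elim_inr, hW₂def]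
      split
      · exact le_refl 0
      · exact mul_nonneg hθ₂.le (hw₂pos i).le
    · simpa [hWdef] using hv0 j
  have hsubj₁ : ∀ (i : ι₁) (j : Fin n), cR n (b₁ i - a) j = ((b₁ i j : ℝ)) - ((a j : ℝ)) := by
    intro i j
    rw [cR_apply]
    have h1 : (b₁ i - a) j = b₁ i j - a j := rfl
    rw [h1]
    push_cast
    ring
  have hsubj₂ : ∀ (i : ι₂) (j : Fin n), cR n (b₂ i - a) j = ((b₂ i j : ℝ)) - ((a j : ℝ)) := by
    intro i j
    rw [cR_apply]
    have h1 : (b₂ i - a) j = b₂ i j - a j := rfl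
    rw [h1]
    push_cast
    ring
  have hterm₁ : ∀ (j : Fin n) (i : ι₁), W₁ i * (cR n (b₁ i - a) j)
      = θ₁ * (w₁ i * z₁ i j) - θ₁ * (w₁ i * u₁ i j) - (θ₁ * (a j : ℝ)) * w₁ i := by
    intro j i
    simp only [hW₁def]
    by_cases h : b₁ i = a
    · rw [if_pos h]
      have hb : ((b₁ i j : ℝ)) = ((a j : ℝ)) := by exact_mod_cast congrFun h j
      rw [hsubj₁ i j, hz₁j i j, hb]
      ring
    · rw [if_neg h, hsubj₁ i j, hz₁j i j]
      ring
  have hterm₂ : ∀ (j : Fin n) (i : ι₂), W₂ i * (cR n (b₂ i - a) j)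
      = θ₂ * (w₂ i * z₂ i j) - θ₂ * (w₂ i * u₂ i j) - (θ₂ * (a j : ℝ)) * w₂ i := by
    intro j i
    simp only [hW₂def]
    by_cases h : b₂ i = a
    · rw [if_pos h]
      have hb : ((b₂ i j : ℝ)) = ((a j : ℝ)) := by exact_mod_cast congrFun h j
      rw [hsubj₂ i j, hz₂j i j, hb]
      ring
    · rw [if_neg h, hsubj₂ i j, hz₂j i j]
      ring
  have hsum₁ : ∀ j, ∑ i, W₁ i * (cR n (b₁ i - a) j)
      = θ₁ * x₁ j - θ₁ * (∑ i, w₁ i * u₁ i j) - θ₁ * (a j : ℝ) := by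
    intro j
    rw [Finset.sum_congr rfl fun i _ => hterm₁ j i]
    rw [Finset.sum_sub_distrib, Finset.sum_sub_distrib, ← Finset.mul_sum, ← Finset.mul_sum,
      ← Finset.mul_sum, hx₁j j, hw₁1, mul_one]
  have hsum₂ : ∀ j, ∑ i, W₂ i * (cR n (b₂ i - a) j)
      = θ₂ * x₂ j - θ₂ * (∑ i, w₂ i * u₂ i j) - θ₂ * (a j : ℝ) := by
    intro j
    rw [Finset.sum_congr rfl fun i _ => hterm₂ j i]
    rw [Finset.sum_sub_distrib, Finset.sum_sub_distrib, ← Finset.mul_sum, ← Finset.mul_sum,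
      ← Finset.mul_sum, hx₂j j, hw₂1, mul_one]
  have hsum₃ : ∀ j, ∑ j', v j' * (cR n (Pi.single j' 1) j) = v j := by
    intro j
    have h1 : ∀ j' : Fin n, v j' * (cR n (Pi.single j' 1) j) = if j = j' then v j' else 0 := by
      intro j'
      rw [cR_single, Pi.single_apply]
      split <;> simp
    rw [Finset.sum_congr rfl fun j' _ => h1 j']
    simp
  have hWZ : ∑ i, W i • Z i = (0 : Fin n → ℝ) := by
    funext j
    simp only [Finset.sum_apply, Pi.smul_apply, smul_eq_mul, Pi.zero_apply]
    rw [Fintype.sum_sum_type, Fintype.sum_sum_type]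
    simp only [hWdef, hZdef, Sum.elim_inl, Sum.elim_inr]
    rw [hsum₁ j, hsum₂ j, hsum₃ j, hvj j]
    have h1 := haj j
    linear_combination h1 - ((a j : ℝ)) * hθs
  have hTnn : 0 ≤ ∑ i, W i := Finset.sum_nonneg fun i _ => hW0 i
  have hTpos : 0 < ∑ i, W i := by
    rcases hTnn.lt_or_eq with h | h
    · exact h
    · exfalso
      have hall : ∀ i ∈ Finset.univ, W i = 0 :=
        (Finset.sum_eq_zero_iff_of_nonneg (fun i _ => hW0 i)).1 h.symm
      have hb₁a : ∀ i : ι₁, b₁ i = a := by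
        intro i
        by_contra hne
        have h2 := hall (Sum.inl (Sum.inl i)) (Finset.mem_univ _)
        simp only [hWdef, Sum.elim_inl, hW₁def, if_neg hne] at h2
        exact (mul_pos hθ₁ (hw₁pos i)).ne' h2
      have hb₂a : ∀ i : ι₂, b₂ i = a := by
        intro i
        by_contra hne
        have h2 := hall (Sum.inl (Sum.inr i)) (Finset.mem_univ _)
        simp only [hWdef, Sum.elim_inl, Sum.elim_inr, hW₂def, if_neg hne] at h2
        exact (mul_pos hθ₂ (hw₂pos i)).ne' h2
      have hv : ∀ j, v j = 0 := by
        intro j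
        have h2 := hall (Sum.inr j) (Finset.mem_univ _)
        simpa [hWdef] using h2
      have hsums0 : ∀ j : Fin n, (∑ i, w₁ i * u₁ i j = 0) ∧ (∑ i, w₂ i * u₂ i j = 0) := by
        intro j
        have h1 : 0 ≤ ∑ i, w₁ i * u₁ i j :=
          Finset.sum_nonneg fun i _ => mul_nonneg (hw₁pos i).le (hu₁ i j)
        have h2 : 0 ≤ ∑ i, w₂ i * u₂ i j :=
          Finset.sum_nonneg fun i _ => mul_nonneg (hw₂pos i).le (hu₂ i j)
        have h3 := hv j
        rw [hvj j] at h3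
        constructor
        · by_contra hA
          have hApos : 0 < ∑ i, w₁ i * u₁ i j := lt_of_le_of_ne h1 (Ne.symm hA)
          nlinarith [mul_pos hθ₁ hApos, mul_nonneg hθ₂.le h2]
        · by_contra hA
          have hApos : 0 < ∑ i, w₂ i * u₂ i j := lt_of_le_of_ne h2 (Ne.symm hA)
          nlinarith [mul_pos hθ₂ hApos, mul_nonneg hθ₁.le h1]
      have hu₁0 : ∀ (i : ι₁) (j : Fin n), u₁ i j = 0 := by
        intro i j
        have h4 := (Finset.sum_eq_zero_iff_of_nonneg
          (fun i _ => mul_nonneg (hw₁pos i).le (hu₁ i j))).1 (hsums0 j).1 i (Finset.mem_univ i)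
        exact (mul_eq_zero.1 h4).resolve_left (hw₁pos i).ne'
      have hu₂0 : ∀ (i : ι₂) (j : Fin n), u₂ i j = 0 := by
        intro i j
        have h4 := (Finset.sum_eq_zero_iff_of_nonneg
          (fun i _ => mul_nonneg (hw₂pos i).le (hu₂ i j))).1 (hsums0 j).2 i (Finset.mem_univ i)
        exact (mul_eq_zero.1 h4).resolve_left (hw₂pos i).ne'
      have hx₁a : x₁ = cR n a := by
        rw [← hz₁]
        funext j
        simp only [Finset.sum_apply, Pi.smul_apply, smul_eq_mul]
        calc ∑ i, w₁ i * z₁ i j = ∑ i, w₁ i * (a j : ℝ) := by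
              refine Finset.sum_congr rfl fun i _ => ?_
              rw [hz₁j i j, hu₁0 i j, add_zero]
              congr 1
              exact_mod_cast congrFun (hb₁a i) j
          _ = (a j : ℝ) := by rw [← Finset.sum_mul, hw₁1, one_mul]
          _ = cR n a j := rfl
      have hx₂a : x₂ = cR n a := by
        rw [← hz₂]
        funext j
        simp only [Finset.sum_apply, Pi.smul_apply, smul_eq_mul]
        calc ∑ i, w₂ i * z₂ i j = ∑ i, w₂ i * (a j : ℝ) := by
              refine Finset.sum_congr rfl fun i _ => ?_
              rw [hz₂j i j, hu₂0 i j, add_zero]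
              congr 1
              exact_mod_cast congrFun (hb₂a i) j
          _ = (a j : ℝ) := by rw [← Finset.sum_mul, hw₂1, one_mul]
          _ = cR n a j := rfl
      rcases hcon with h | h
      exacts [h hx₁a, h hx₂a]
  set t : Finset ((ι₁ ⊕ ι₂) ⊕ Fin n) := Finset.univ.filter (fun i => W i ≠ 0) with htdef
  have hmemS : ∀ i ∈ t, Z i ∈ (cR n) '' S := by
    intro i hi
    have hWne : W i ≠ 0 := (Finset.mem_filter.1 hi).2
    rcases i with ((i | i) | j)
    · have hne : b₁ i ≠ a := by
        intro h
        apply hWne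
        simp [hWdef, hW₁def, h]
      exact ⟨b₁ i - a, Or.inl ⟨b₁ i, hb₁A i, hne, rfl⟩, by simp [hZdef]⟩
    · have hne : b₂ i ≠ a := by
        intro h
        apply hWne
        simp [hWdef, hW₂def, h]
      exact ⟨b₂ i - a, Or.inl ⟨b₂ i, hb₂A i, hne, rfl⟩, by simp [hZdef]⟩
    · exact ⟨Pi.single j 1, Or.inr ⟨j, rfl⟩, by simp [hZdef]⟩
  have hsubW : ∑ i ∈ t, W i = ∑ i, W i := Finset.sum_filter_ne_zero Finset.univ
  have h0mem : (0 : Fin n → ℝ) ∈ convexHull ℝ ((cR n) '' S) := by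
    have hcm := Finset.centerMass_mem_convexHull t (fun i _ => hW0 i) (by rwa [hsubW]) hmemS
    have hzm : t.centerMass W Z = 0 := by
      simp only [Finset.centerMass]
      have h6 : ∑ i ∈ t, W i • Z i = ∑ i, W i • Z i := by
        refine Finset.sum_filter_of_ne fun i _ h => ?_
        intro hW
        exact h (by rw [hW, zero_smul])
      rw [h6, hWZ, smul_zero]
    rwa [hzm] at hcm
  have hSne : ∀ g ∈ S, g ≠ 0 := by
    rintro g (⟨a', ha'A, ha'ne, rfl⟩ | ⟨i, rfl⟩)
    · exact sub_ne_zero_of_ne ha'ne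
    · intro h
      have h2 := congrFun h i
      simp [Pi.single_eq_same] at h2
  obtain ⟨x, hx0, hxm, hnxm⟩ := key_rat S hSne h0mem
  exact hx0 (hpt x hxm hnxm)

end Stmt2Aux

/-- For a finite set `A ⊆ ℕⁿ` and `a ∈ A`, the ideal tangent cone
`IT_a = ℕ⟨a' - a : a' ∈ A, a' ≠ a⟩ + ℕ⟨e₁,…,eₙ⟩` is pointed if and only if
`a` is a vertex (extreme point) of the Newton polyhedron `conv(A + ℝ≥0ⁿ)`. -/
theorem stmt_2 {n : ℕ} (A : Finset (Fin n → ℤ)) (hA : ∀ a ∈ A, ∀ i, 0 ≤ a i)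
    (a : Fin n → ℤ) (ha : a ∈ A)
    (IT : AddSubmonoid (Fin n → ℤ))
    (hIT : IT = AddSubmonoid.closure
      ({v | ∃ a' ∈ A, a' ≠ a ∧ v = a' - a} ∪ Set.range (fun i => Pi.single i (1 : ℤ))))
    (N : Set (Fin n → ℝ))
    (hN : N = convexHull ℝ
      ((fun (v : Fin n → ℤ) (i : Fin n) => (v i : ℝ)) '' (A : Set (Fin n → ℤ))
        + {x : Fin n → ℝ | ∀ i, 0 ≤ x i})) :
    (∀ x ∈ IT, -x ∈ IT → x = 0) ↔
      (fun i => (a i : ℝ)) ∈ Set.extremePoints ℝ N := by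
  subst hIT hN
  have hfun : (fun (v : Fin n → ℤ) (i : Fin n) => (v i : ℝ)) = ⇑(Stmt2Aux.cR n) := rfl
  rw [hfun]
  constructor
  · intro hpt
    exact Stmt2Aux.dir2 A a ha hpt
  · intro hext
    exact Stmt2Aux.dir1 A a ha hext
end

section
/- Let A ⊆ ℕ^n be finite and a ∈ A a point that is not a vertex of the Newton polyhedron N = conv(A + ℝ≥0^n). If a' is a vertex of N appearing with positive coefficient in a convex combination of vertices representing a, then IT_{a'} ⊆ IT_a, where IT_b denotes the ideal tangent cone of b (the ℕ-span of {c - b : c ∈ A, c ≠ b} ∪ {e_1,...,e_n}). -/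
open Pointwise


open Finset

lemma aux_rat_sol {ι κ : Type*} [Fintype ι] [Fintype κ]
    (u : ι → κ → ℤ) (w : ι → ℝ) (hw : ∀ v, 0 < w v)
    (h : ∀ i, ∑ v, w v * (u v i : ℝ) = 0) :
    ∃ x : ι → ℚ, (∀ v, 0 < x v) ∧ ∀ i, ∑ v, x v * (u v i : ℚ) = 0 := by
  classical
  set E := Submodule.span ℚ (Set.range w) with hE
  haveI : FiniteDimensional ℚ E := FiniteDimensional.span_of_finite ℚ (Set.finite_range w)
  set d := Module.finrank ℚ E with hd
  set B : Module.Basis (Fin d) ℚ E := Module.finBasis ℚ E with hB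
  have hwE : ∀ v, w v ∈ E := fun v => Submodule.subset_span ⟨v, rfl⟩
  set q : ι → Fin d → ℚ := fun v j => B.repr ⟨w v, hwE v⟩ j with hq
  set bR : Fin d → ℝ := fun j => ((B j : E) : ℝ) with hbR
  have hrep : ∀ v, w v = ∑ j, (q v j : ℝ) * bR j := by
    intro v
    have h1 := B.sum_repr ⟨w v, hwE v⟩
    have h2 := congrArg (Subtype.val) h1
    simp only [AddSubmonoidClass.coe_finset_sum, SetLike.val_smul, Rat.smul_def] at h2
    exact h2.symm
  have hli : LinearIndependent ℚ bR := by
    have := B.linearIndependent.map' E.subtype (Submodule.ker_subtype E)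
    exact this
  -- key: each column of repr coefficients is a rational solution
  have hq0 : ∀ i j, ∑ v, q v j * (u v i : ℚ) = 0 := by
    intro i j
    have h1 : ∑ j, (∑ v, (q v j : ℝ) * (u v i : ℝ)) * bR j = 0 := by
      rw [← h i]
      calc ∑ j, (∑ v, (q v j : ℝ) * (u v i : ℝ)) * bR j
          = ∑ j, ∑ v, (q v j : ℝ) * (bR j) * (u v i : ℝ) := by
            refine Finset.sum_congr rfl fun j _ => ?_
            rw [Finset.sum_mul]
            exact Finset.sum_congr rfl fun v _ => by ring
        _ = ∑ v, ∑ j, (q v j : ℝ) * (bR j) * (u v i : ℝ) := Finset.sum_comm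
        _ = ∑ v, w v * (u v i : ℝ) := by
            refine Finset.sum_congr rfl fun v _ => ?_
            rw [hrep v, Finset.sum_mul]
    have h2 := Fintype.linearIndependent_iff.mp hli
      (fun j => ∑ v, q v j * (u v i : ℚ)) ?_ j
    · exact h2
    · rw [← h1]
      refine Finset.sum_congr rfl fun j _ => ?_
      rw [Rat.smul_def]
      push_cast
      ring
  -- density: find a rational point near bR keeping positivity
  set U : Set (Fin d → ℝ) := {t | ∀ v, 0 < ∑ j, (q v j : ℝ) * t j} with hU
  have hUopen : IsOpen U := by
    have : U = ⋂ v, {t : Fin d → ℝ | 0 < ∑ j, (q v j : ℝ) * t j} := by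
      ext t; simp [hU]
    rw [this]
    refine isOpen_iInter_of_finite fun v => ?_
    exact isOpen_lt continuous_const
      (continuous_finset_sum _ fun j _ => continuous_const.mul (continuous_apply j))
  have hbU : bR ∈ U := fun v => (hrep v) ▸ hw v
  have hdense : Dense (Set.pi Set.univ fun _ : Fin d => Set.range ((↑) : ℚ → ℝ)) :=
    dense_pi Set.univ fun _ _ => Rat.denseRange_cast
  obtain ⟨t, htrat, htU⟩ := hdense.exists_mem_open hUopen ⟨bR, hbU⟩
  choose β hβ using fun j => htrat j (Set.mem_univ j)
  refine ⟨fun v => ∑ j, q v j * β j, ?_, ?_⟩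
  · intro v
    have : (0 : ℝ) < ((∑ j, q v j * β j : ℚ) : ℝ) := by
      push_cast
      simp only [hβ]
      exact htU v
    exact_mod_cast this
  · intro i
    calc ∑ v, (∑ j, q v j * β j) * (u v i : ℚ)
        = ∑ v, ∑ j, q v j * (u v i : ℚ) * β j := by
          refine Finset.sum_congr rfl fun v _ => ?_
          rw [Finset.sum_mul]
          exact Finset.sum_congr rfl fun j _ => by ring
      _ = ∑ j, ∑ v, q v j * (u v i : ℚ) * β j := Finset.sum_comm
      _ = 0 := by
          refine Finset.sum_eq_zero fun j _ => ?_
          rw [← Finset.sum_mul, hq0 i j, zero_mul]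

lemma aux_int_sol {ι κ : Type*} [Fintype ι] [Fintype κ]
    (u : ι → κ → ℤ) (w : ι → ℝ) (hw : ∀ v, 0 < w v)
    (h : ∀ i, ∑ v, w v * (u v i : ℝ) = 0) :
    ∃ m : ι → ℤ, (∀ v, 0 < m v) ∧ ∀ i, ∑ v, m v * u v i = 0 := by
  classical
  obtain ⟨x, hx, hsol⟩ := aux_rat_sol u w hw h
  set D : ℕ := ∏ v, (x v).den with hD
  have hDpos : 0 < D := Finset.prod_pos fun v _ => (x v).pos
  set m : ι → ℤ := fun v => (x v).num * ((D / (x v).den : ℕ) : ℤ) with hm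
  have hcast : ∀ v, (m v : ℚ) = x v * D := by
    intro v
    have hdvd : (x v).den ∣ D := Finset.dvd_prod_of_mem _ (Finset.mem_univ v)
    obtain ⟨c, hc⟩ := hdvd
    have hden : ((x v).den : ℚ) ≠ 0 := by exact_mod_cast (x v).pos.ne'
    have h1 : (D / (x v).den : ℕ) = c := by
      rw [hc]; exact Nat.mul_div_cancel_left c (x v).pos
    have h2 : (x v) * (x v).den = (x v).num := by
      have := (div_eq_iff hden).mp (Rat.num_div_den (x v))
      linarith [this]
    rw [hm]
    simp only [h1]
    push_cast
    rw [hc]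
    push_cast
    rw [← h2]
    ring
  refine ⟨m, ?_, ?_⟩
  · intro v
    have : (0:ℚ) < m v := by
      rw [hcast v]
      have : (0:ℚ) < D := by exact_mod_cast hDpos
      exact mul_pos (hx v) this
    exact_mod_cast this
  · intro i
    have : ((∑ v, m v * u v i : ℤ) : ℚ) = 0 := by
      push_cast
      calc ∑ v, (m v : ℚ) * (u v i : ℚ)
          = (∑ v, x v * (u v i : ℚ)) * D := by
            rw [Finset.sum_mul]
            exact Finset.sum_congr rfl fun v _ => by rw [hcast v]; ring
        _ = 0 := by rw [hsol i, zero_mul]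
    exact_mod_cast this


/-- If `a ∈ A` is not a vertex of the Newton polyhedron `N = conv(A + ℝ≥0ⁿ)`, and `a'`
is a vertex of `N` appearing with positive coefficient in a convex combination of
vertices representing `a`, then `IT_{a'} ⊆ IT_a`. -/
theorem stmt_3 {n : ℕ} (A : Finset (Fin n → ℤ)) (hA : ∀ a ∈ A, ∀ i, 0 ≤ a i)
    (a a' : Fin n → ℤ) (ha : a ∈ A) (ha' : a' ∈ A)
    (N : Set (Fin n → ℝ))
    (hN : N = convexHull ℝ
      ((fun (v : Fin n → ℤ) (i : Fin n) => (v i : ℝ)) '' (A : Set (Fin n → ℤ))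
        + {x : Fin n → ℝ | ∀ i, 0 ≤ x i}))
    (hnotvert : (fun i => (a i : ℝ)) ∉ Set.extremePoints ℝ N)
    (V : Finset (Fin n → ℤ)) (hVA : V ⊆ A)
    (hVvert : ∀ v ∈ V, (fun i => (v i : ℝ)) ∈ Set.extremePoints ℝ N)
    (w : (Fin n → ℤ) → ℝ) (hwpos : ∀ v ∈ V, 0 < w v) (hwsum : ∑ v ∈ V, w v = 1)
    (hcomb : ∑ v ∈ V, w v • (fun i => ((v i : ℝ))) = (fun i => (a i : ℝ)))
    (ha'V : a' ∈ V) :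
    AddSubmonoid.closure
        ({v | ∃ c ∈ A, c ≠ a' ∧ v = c - a'} ∪ Set.range (fun i => Pi.single i (1 : ℤ)))
      ≤ AddSubmonoid.closure
        ({v | ∃ c ∈ A, c ≠ a ∧ v = c - a} ∪ Set.range (fun i => Pi.single i (1 : ℤ))) := by
  classical
  set S := AddSubmonoid.closure
      ({v | ∃ c ∈ A, c ≠ a ∧ v = c - a} ∪ Set.range (fun i => Pi.single i (1 : ℤ))) with hS
  have hva : ∀ v ∈ V, v ≠ a := by
    intro v hv hveq
    exact hnotvert (hveq ▸ hVvert v hv)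
  have hco : ∀ i, ∑ v ∈ V, w v * ((v i : ℝ) - (a i : ℝ)) = 0 := by
    intro i
    have h1 := congrFun hcomb i
    simp only [Finset.sum_apply, Pi.smul_apply, smul_eq_mul] at h1
    calc ∑ v ∈ V, w v * ((v i : ℝ) - (a i : ℝ))
        = ∑ v ∈ V, (w v * (v i : ℝ) - w v * (a i : ℝ)) :=
          Finset.sum_congr rfl fun v _ => by ring
      _ = (∑ v ∈ V, w v * (v i : ℝ)) - (∑ v ∈ V, w v) * (a i : ℝ) := by
          rw [Finset.sum_sub_distrib, Finset.sum_mul]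
      _ = 0 := by rw [h1, hwsum, one_mul, sub_self]
  obtain ⟨m, hmpos, hmsol⟩ := aux_int_sol (ι := {v // v ∈ V}) (κ := Fin n)
    (fun v i => (v : Fin n → ℤ) i - a i) (fun v => w v)
    (fun v => hwpos v v.2)
    (by
      intro i
      rw [Finset.univ_eq_attach,
        Finset.sum_attach V (fun v => w v * (((v i - a i : ℤ)) : ℝ))]
      have := hco i
      push_cast
      convert this using 2)
  have hgenS : ∀ c ∈ A, c ≠ a → c - a ∈ S := fun c hc hne =>
    AddSubmonoid.subset_closure (Or.inl ⟨c, hc, hne, rfl⟩)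
  have hz : ∀ (k : ℤ), 0 ≤ k → ∀ x ∈ S, k • x ∈ S := by
    intro k hk x hx
    obtain ⟨p, rfl⟩ := Int.eq_ofNat_of_zero_le hk
    rw [natCast_zsmul]
    exact AddSubmonoid.nsmul_mem S hx p
  set va' : {v // v ∈ V} := ⟨a', ha'V⟩ with hva'
  have hsum0 : ∑ v : {v // v ∈ V}, m v • ((v : Fin n → ℤ) - a) = (0 : Fin n → ℤ) := by
    funext i
    simp only [Finset.sum_apply, Pi.smul_apply, Pi.sub_apply, smul_eq_mul, Pi.zero_apply]
    exact hmsol i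
  have hkey : a - a' ∈ S := by
    have h0 : (∑ v ∈ Finset.univ.erase va', m v • ((v : Fin n → ℤ) - a))
        + m va' • (a' - a) = 0 := by
      rw [Finset.sum_erase_add _ _ (Finset.mem_univ va')]
      exact hsum0
    have hrepr : a - a' = (∑ v ∈ Finset.univ.erase va', m v • ((v : Fin n → ℤ) - a))
        + (m va' - 1) • (a' - a) := by
      have h1 : (m va' - 1) • (a' - a) = m va' • (a' - a) - (a' - a) := by
        rw [sub_smul, one_smul]
      rw [h1]
      have h2 : (∑ v ∈ Finset.univ.erase va', m v • ((v : Fin n → ℤ) - a))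
          + (m va' • (a' - a) - (a' - a))
          = ((∑ v ∈ Finset.univ.erase va', m v • ((v : Fin n → ℤ) - a))
            + m va' • (a' - a)) - (a' - a) := by abel
      rw [h2, h0, zero_sub, neg_sub]
    rw [hrepr]
    refine AddSubmonoid.add_mem _ ?_ ?_
    · refine AddSubmonoid.sum_mem _ fun v _ => ?_
      exact hz (m v) (hmpos v).le _ (hgenS v (hVA v.2) (hva v v.2))
    · refine hz (m va' - 1) ?_ _ (hgenS a' ha' (hva a' ha'V))
      have := hmpos va'
      omega
  refine AddSubmonoid.closure_le.mpr ?_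
  rintro x (⟨c, hcA, hca', rfl⟩ | hx)
  · by_cases hc : c = a
    · subst hc
      exact hkey
    · have hdecomp : c - a' = (c - a) + (a - a') := by abel
      rw [hdecomp]
      exact AddSubmonoid.add_mem _ (hgenS c hcA hc) hkey
  · exact AddSubmonoid.subset_closure (Or.inr hx)
end

section
/- The kernel of the ring homomorphism K[t_1,...,t_l] → K[x_1^{±1},...,x_n^{±1}] sending t_i to x^{v_i} (for given vectors v_1,...,v_l ∈ ℤ^n) is generated, as an ideal, by binomials of the form t^α - t^β with α, β ∈ ℕ^l satisfying Σ α_i v_i = Σ β_i v_i. -/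
open MvPolynomial

section Aux

variable {l n : ℕ} {K : Type*} [Field K] (v : Fin l → (Fin n → ℤ))

private noncomputable def phi : MvPolynomial (Fin l) K →ₐ[K] AddMonoidAlgebra K (Fin n → ℤ) :=
  MvPolynomial.aeval (fun i => AddMonoidAlgebra.of' K (Fin n → ℤ) (v i))

private def fdeg (a : Fin l →₀ ℕ) : Fin n → ℤ := ∑ i, (a i : ℤ) • v i

private lemma phi_monomial (a : Fin l →₀ ℕ) (c : K) :
    phi v (monomial a c) = AddMonoidAlgebra.single (fdeg v a) c := by
  classical
  rw [phi, aeval_monomial, Finsupp.prod_fintype _ _ (fun i => pow_zero _)]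
  have : ∀ i : Fin l, (AddMonoidAlgebra.of' K (Fin n → ℤ) (v i)) ^ (a i)
      = AddMonoidAlgebra.single ((a i : ℤ) • v i) (1 : K) := by
    intro i
    rw [AddMonoidAlgebra.of'_apply, AddMonoidAlgebra.single_pow, one_pow,
      Nat.cast_smul_eq_nsmul]
  simp_rw [this]
  rw [AddMonoidAlgebra.prod_single, Finset.prod_const_one]
  have halg : (algebraMap K (AddMonoidAlgebra K (Fin n → ℤ))) c
      = AddMonoidAlgebra.single (0 : Fin n → ℤ) c := rfl
  rw [halg, fdeg, AddMonoidAlgebra.single_mul_single, zero_add, mul_one]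

end Aux

/-- The kernel of the `K`-algebra map `K[t₁,…,t_l] → K[x₁^{±1},…,xₙ^{±1}]`, sending
`tᵢ` to the Laurent monomial `x^{vᵢ}`, is generated as an ideal by the binomials
`t^α - t^β` with `Σ αᵢ vᵢ = Σ βᵢ vᵢ`. -/
theorem stmt_4 {l n : ℕ} (K : Type*) [Field K] (v : Fin l → (Fin n → ℤ)) :
    RingHom.ker ((MvPolynomial.aeval
        (fun i => AddMonoidAlgebra.of' K (Fin n → ℤ) (v i)) :
        MvPolynomial (Fin l) K →ₐ[K] AddMonoidAlgebra K (Fin n → ℤ)).toRingHom) =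
      Ideal.span {p : MvPolynomial (Fin l) K |
        ∃ α β : Fin l →₀ ℕ, (∑ i, (α i : ℤ) • v i) = (∑ i, (β i : ℤ) • v i) ∧
          p = MvPolynomial.monomial α (1 : K) - MvPolynomial.monomial β (1 : K)} := by
  classical
  set S : Set (MvPolynomial (Fin l) K) := {p : MvPolynomial (Fin l) K |
        ∃ α β : Fin l →₀ ℕ, (∑ i, (α i : ℤ) • v i) = (∑ i, (β i : ℤ) • v i) ∧
          p = MvPolynomial.monomial α (1 : K) - MvPolynomial.monomial β (1 : K)} with hS
  have hphi : ∀ p : MvPolynomial (Fin l) K,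
      (MvPolynomial.aeval (fun i => AddMonoidAlgebra.of' K (Fin n → ℤ) (v i))) p = phi v p :=
    fun p => rfl
  apply le_antisymm
  · -- kernel ⊆ span
    intro p hp
    rw [RingHom.mem_ker] at hp
    -- strong induction on support card
    have main : ∀ N : ℕ, ∀ q : MvPolynomial (Fin l) K, q.support.card ≤ N →
        phi v q = 0 → q ∈ Ideal.span S := by
      intro N
      induction N with
      | zero =>
        intro q hcard _
        have : q.support = ∅ := Finset.card_eq_zero.mp (Nat.le_zero.mp hcard)
        have : q = 0 := by
          ext a
          by_contra h
          exact Finset.notMem_empty a (this ▸ MvPolynomial.mem_support_iff.mpr h)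
        simp [this]
      | succ N ih =>
        intro q hcard hq0
        by_cases hq : q = 0
        · simp [hq]
        · obtain ⟨α, hα⟩ := (MvPolynomial.support_nonempty.mpr hq)
          -- evaluate phi q at fdeg v α
          have hsum : ∑ a ∈ q.support, (if fdeg v a = fdeg v α then q.coeff a else 0) = 0 := by
            have : q = ∑ a ∈ q.support, monomial a (q.coeff a) := (MvPolynomial.as_sum q)
            have h2 : phi v q = ∑ a ∈ q.support, AddMonoidAlgebra.single (fdeg v a) (q.coeff a) := by
              conv_lhs => rw [this]
              rw [map_sum]
              exact Finset.sum_congr rfl fun a _ => phi_monomial v a _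
            have h3 := congrArg (fun g : AddMonoidAlgebra K (Fin n → ℤ) => g.coeff (fdeg v α)) (h2.symm.trans hq0)
            simpa [AddMonoidAlgebra.coeff_sum, Finset.sum_apply', AddMonoidAlgebra.coeff_single_apply, Finsupp.single_apply] using h3
          -- find β ≠ α in support with same fdeg
          have hex : ∃ β ∈ q.support, β ≠ α ∧ fdeg v β = fdeg v α := by
            by_contra hne
            push_neg at hne
            rw [Finset.sum_eq_single_of_mem α hα
              (fun b hb hbne => by simp [hne b hb hbne])] at hsum
            simp at hsum
            exact (MvPolynomial.mem_support_iff.mp hα) hsum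
          obtain ⟨β, hβmem, hβne, hβdeg⟩ := hex
          set c := q.coeff α with hc
          set b : MvPolynomial (Fin l) K := monomial α (1 : K) - monomial β (1 : K) with hb
          have hbS : b ∈ S := ⟨α, β, hβdeg.symm, rfl⟩
          set q' : MvPolynomial (Fin l) K := q - C c * b with hq'
          have hphib : phi v b = 0 := by
            rw [hb, map_sub, phi_monomial, phi_monomial, hβdeg, sub_self]
          have hq'0 : phi v q' = 0 := by
            rw [hq', map_sub, map_mul, hphib, mul_zero, sub_zero, hq0]
          have hcoeff : ∀ a, q'.coeff a = q.coeff a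
              - c * ((if α = a then (1:K) else 0) - (if β = a then (1:K) else 0)) := by
            intro a
            rw [hq', hb]
            simp [MvPolynomial.coeff_sub, MvPolynomial.coeff_C_mul, MvPolynomial.coeff_monomial,
              mul_sub]
          have hsub : q'.support ⊆ q.support.erase α := by
            intro a ha
            rw [MvPolynomial.mem_support_iff] at ha
            rw [Finset.mem_erase]
            constructor
            · rintro rfl
              apply ha
              rw [hcoeff]
              simp [hβne, ← hc]
            · by_cases haβ : a = β
              · exact haβ ▸ hβmem
              · rw [MvPolynomial.mem_support_iff]
                intro h0
                apply ha
                rw [hcoeff, h0]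
                have h1 : α ≠ a := by
                  rintro rfl; exact ha (by rw [hcoeff]; simp [hβne, ← hc])
                simp [h1, Ne.symm haβ]
          have hcard' : q'.support.card ≤ N := by
            have h1 : q'.support.card ≤ (q.support.erase α).card := Finset.card_le_card hsub
            have h2 : (q.support.erase α).card < q.support.card := Finset.card_erase_lt_of_mem hα
            omega
          have hq'mem : q' ∈ Ideal.span S := ih q' hcard' hq'0
          have : q = q' + C c * b := by rw [hq']; ring
          rw [this]
          exact Ideal.add_mem _ hq'mem
            (Ideal.mul_mem_left _ _ (Ideal.subset_span hbS))
    exact main p.support.card p le_rfl (by rw [← hphi]; exact hp)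
  · -- span ⊆ kernel
    rw [Ideal.span_le]
    rintro p ⟨α, β, hdeg, rfl⟩
    rw [SetLike.mem_coe, RingHom.mem_ker]
    show phi v _ = 0
    rw [map_sub, phi_monomial, phi_monomial]
    rw [show fdeg v α = fdeg v β from hdeg, sub_self]
end

section
/- Let I = (x_i : i ∈ I) and J = (x_j : j ∈ J) be two coordinate ideals in K[x_1,...,x_n] whose index sets satisfy: I ∩ J ≠ ∅, I ⊄ J, and J ⊄ I. Then the Newton polyhedron of I·J has a vertex whose ideal tangent cone is not simplicial (it has more than n minimal generators). Concretely, if 1 ∈ I\J, 2 ∈ J\I, and c ∈ I∩J, then e_1 + e_2 is a vertex and both e_c - e_1 and e_c - e_2 are minimal generators of IT_{e_1+e_2}. -/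
open Pointwise

/-- Weighted sum functional is linear. -/
lemma wsum_linear {n : ℕ} (w : Fin n → ℝ) :
    IsLinearMap ℝ (fun x : Fin n → ℝ => ∑ k, w k * x k) := by
  constructor
  · intro x y; simp [mul_add, Finset.sum_add_distrib]
  · intro c x; simp only [Pi.smul_apply, smul_eq_mul, Finset.mul_sum]; congr 1; ext k; ring

lemma hull_bound {n : ℕ} (A : Set (Fin n → ℝ)) (w : Fin n → ℝ) (a : ℝ)
    (hA : ∀ x ∈ A, a ≤ ∑ k, w k * x k) :
    ∀ x ∈ convexHull ℝ A, a ≤ ∑ k, w k * x k :=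
  fun x hx => convexHull_min hA (convex_halfSpace_ge (wsum_linear w) a) hx

lemma eq_of_combo {a b lx ly m : ℝ} (ha : 0 < a) (hb : 0 < b) (hab : a + b = 1)
    (h : a * lx + b * ly = m) (h1 : m ≤ lx) (h2 : m ≤ ly) : lx = m ∧ ly = m := by
  have t1 : 0 ≤ a * (lx - m) := mul_nonneg ha.le (by linarith)
  have t2 : 0 ≤ b * (ly - m) := mul_nonneg hb.le (by linarith)
  have h3 : a * (lx - m) + b * (ly - m) = 0 := by linear_combination h - m * hab
  have e1 : a * (lx - m) = 0 := by linarith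
  have e2 : b * (ly - m) = 0 := by linarith
  constructor
  · rcases mul_eq_zero.mp e1 with h' | h'
    · exact absurd h' ha.ne'
    · linarith
  · rcases mul_eq_zero.mp e2 with h' | h'
    · exact absurd h' hb.ne'
    · linarith

lemma wsum_pair {n : ℕ} (w : Fin n → ℝ) (i j : Fin n) :
    ∑ k, w k * (((Pi.single i (1:ℤ) + Pi.single j 1 : Fin n → ℤ) k : ℤ) : ℝ) = w i + w j := by
  have : ∀ k, (((Pi.single i (1:ℤ) + Pi.single j 1 : Fin n → ℤ) k : ℤ) : ℝ)
      = (if k = i then (1:ℝ) else 0) + (if k = j then 1 else 0) := by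
    intro k; simp [Pi.single_apply]
  simp only [this, mul_add, Finset.sum_add_distrib, mul_ite, mul_one, mul_zero,
    Finset.sum_ite_eq', Finset.mem_univ, if_true]

/-- For coordinate ideals with index sets `I`, `J` such that `I ∩ J ≠ ∅`, `I ⊄ J`,
`J ⊄ I`: if `p ∈ I \ J`, `q ∈ J \ I` and `c ∈ I ∩ J`, then `e_p + e_q` is a vertex of
the Newton polyhedron of the product, and both `e_c - e_p` and `e_c - e_q` are minimal
(irreducible) generators of the ideal tangent cone there; in particular the ideal
tangent cone is not simplicial. -/
theorem stmt_13 {n : ℕ} (I J : Finset (Fin n)) (p q c : Fin n)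
    (hpI : p ∈ I) (hpJ : p ∉ J) (hqJ : q ∈ J) (hqI : q ∉ I) (hcI : c ∈ I) (hcJ : c ∈ J)
    (C : Set (Fin n → ℤ))
    (hC : C = {x | ∃ i ∈ I, ∃ j ∈ J, x = Pi.single i (1 : ℤ) + Pi.single j 1})
    (v : Fin n → ℤ) (hv : v = Pi.single p 1 + Pi.single q 1)
    (IT : AddSubmonoid (Fin n → ℤ))
    (hIT : IT = AddSubmonoid.closure
      ({w | ∃ x ∈ C, x ≠ v ∧ w = x - v} ∪ Set.range (fun i => Pi.single i (1 : ℤ)))) :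
    ((fun i => (v i : ℝ)) ∈ Set.extremePoints ℝ (convexHull ℝ
      ((fun (x : Fin n → ℤ) (i : Fin n) => (x i : ℝ)) '' C + {x : Fin n → ℝ | ∀ i, 0 ≤ x i})))
    ∧ (Pi.single c (1 : ℤ) - Pi.single p 1) ∈ IT
    ∧ (Pi.single c (1 : ℤ) - Pi.single q 1) ∈ IT
    ∧ (∀ x ∈ IT, ∀ y ∈ IT, Pi.single c (1 : ℤ) - Pi.single p 1 = x + y → x = 0 ∨ y = 0)
    ∧ (∀ x ∈ IT, ∀ y ∈ IT, Pi.single c (1 : ℤ) - Pi.single q 1 = x + y → x = 0 ∨ y = 0) := by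
  have hpq : p ≠ q := fun h => hqI (h ▸ hpI)
  have hcp : c ≠ p := fun h => hpJ (h ▸ hcJ)
  have hcq : c ≠ q := fun h => hqI (h ▸ hcI)
  subst hC hv hIT
  set v : Fin n → ℤ := Pi.single p 1 + Pi.single q 1 with hv
  set C : Set (Fin n → ℤ) := {x | ∃ i ∈ I, ∃ j ∈ J, x = Pi.single i (1 : ℤ) + Pi.single j 1} with hC
  set G : Set (Fin n → ℤ) := {w | ∃ x ∈ C, x ≠ v ∧ w = x - v} with hG
  set E : Set (Fin n → ℤ) := Set.range (fun i => Pi.single i (1 : ℤ)) with hE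
  -- degree functional
  set ψ : (Fin n → ℤ) → ℤ := fun x => ∑ k, x k with hψ
  set φ : (Fin n → ℤ) → ℤ := fun x => x p + x q with hφ
  have ψsingle : ∀ i : Fin n, ψ (Pi.single i (1:ℤ)) = 1 := by
    intro i; simp [hψ, Finset.sum_pi_single']
  have ψadd : ∀ x y, ψ (x + y) = ψ x + ψ y := by
    intro x y; simp [hψ, Finset.sum_add_distrib]
  have ψsub : ∀ x y, ψ (x - y) = ψ x - ψ y := by
    intro x y; simp [hψ, Finset.sum_sub_distrib]
  -- L1
  have L1 : ∀ z ∈ AddSubmonoid.closure (G ∪ E),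
      0 ≤ ψ z ∧ (ψ z = 0 → z ∈ AddSubmonoid.closure G) := by
    intro z hz
    induction hz using AddSubmonoid.closure_induction with
    | mem x hx =>
      rcases hx with hx | hx
      · refine ⟨le_of_eq ?_, fun _ => AddSubmonoid.subset_closure hx⟩
        obtain ⟨w, ⟨i, hi, j, hj, rfl⟩, hne, rfl⟩ := hx
        simp [ψsub, ψadd, ψsingle, hv]
      · obtain ⟨i, rfl⟩ := hx
        simp [ψsingle]
    | zero => exact ⟨by simp [hψ], fun _ => zero_mem _⟩
    | add x y hx hy ihx ihy =>
      obtain ⟨hx0, hx1⟩ := ihx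
      obtain ⟨hy0, hy1⟩ := ihy
      refine ⟨by rw [ψadd]; omega, fun h => ?_⟩
      rw [ψadd] at h
      exact AddSubmonoid.add_mem _ (hx1 (by omega)) (hy1 (by omega))
  -- L2
  have L2 : ∀ z ∈ AddSubmonoid.closure G, z = 0 ∨ φ z ≤ -1 := by
    intro z hz
    induction hz using AddSubmonoid.closure_induction with
    | mem x hx =>
      right
      obtain ⟨w, ⟨i, hi, j, hj, rfl⟩, hne, rfl⟩ := hx
      have hip : j ≠ p := fun h => hpJ (h ▸ hj)
      have hjq : i ≠ q := fun h => hqI (h ▸ hi)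
      have : ¬ (i = p ∧ j = q) := by
        rintro ⟨rfl, rfl⟩; exact hne rfl
      simp only [hφ, hv, Pi.sub_apply, Pi.add_apply, Pi.single_apply]
      by_cases h1 : i = p <;> by_cases h2 : j = q <;>
        simp_all [hpq, hpq.symm, Pi.single_apply] <;> omega
    | zero => left; rfl
    | add x y hx hy ihx ihy =>
      rcases ihx with rfl | hx1
      · simpa using ihy
      rcases ihy with rfl | hy1
      · right; simpa using hx1
      · right; simp only [hφ, Pi.add_apply] at *; omega
  -- main minimality lemma
  have key : ∀ t : Fin n → ℤ, ψ t = 0 → φ t = -1 →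
      ∀ x ∈ AddSubmonoid.closure (G ∪ E), ∀ y ∈ AddSubmonoid.closure (G ∪ E),
      t = x + y → x = 0 ∨ y = 0 := by
    intro t htψ htφ x hx y hy heq
    obtain ⟨hx0, hx1⟩ := L1 x hx
    obtain ⟨hy0, hy1⟩ := L1 y hy
    have hsum : ψ x + ψ y = 0 := by rw [← ψadd, ← heq, htψ]
    have hxG := hx1 (by omega)
    have hyG := hy1 (by omega)
    rcases L2 x hxG with rfl | hx2
    · left; rfl
    rcases L2 y hyG with rfl | hy2
    · right; rfl
    exfalso
    have hφadd : φ (x + y) = φ x + φ y := by simp [hφ]; ring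
    have : φ x + φ y = -1 := by rw [← hφadd, ← heq]; exact htφ
    omega
  -- membership of the two generators
  have memp : (Pi.single c (1 : ℤ) - Pi.single p 1) ∈ AddSubmonoid.closure (G ∪ E) := by
    apply AddSubmonoid.subset_closure
    left
    refine ⟨Pi.single c 1 + Pi.single q 1, ⟨c, hcI, q, hqJ, rfl⟩, ?_, by rw [hv]; abel⟩
    intro h
    have := congrFun h c
    simp [hv, Pi.single_apply, hcp, hcq] at this
  have memq : (Pi.single c (1 : ℤ) - Pi.single q 1) ∈ AddSubmonoid.closure (G ∪ E) := by
    apply AddSubmonoid.subset_closure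
    left
    refine ⟨Pi.single p 1 + Pi.single c 1, ⟨p, hpI, c, hcJ, rfl⟩, ?_, by rw [hv]; abel⟩
    intro h
    have := congrFun h c
    simp [hv, Pi.single_apply, hcp, hcq] at this
  have ψcp : ψ (Pi.single c (1:ℤ) - Pi.single p 1) = 0 := by simp [ψsub, ψsingle]
  have ψcq : ψ (Pi.single c (1:ℤ) - Pi.single q 1) = 0 := by simp [ψsub, ψsingle]
  have φcp : φ (Pi.single c (1:ℤ) - Pi.single p 1) = -1 := by
    simp [hφ, Pi.single_apply, hcp, hcq, hpq, hpq.symm, (Ne.symm hcp), (Ne.symm hcq)]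
  have φcq : φ (Pi.single c (1:ℤ) - Pi.single q 1) = -1 := by
    simp [hφ, Pi.single_apply, hcp, hcq, hpq, hpq.symm, (Ne.symm hcp), (Ne.symm hcq)]
  refine ⟨?_, memp, memq, key _ ψcp φcp, key _ ψcq φcq⟩
  -- extreme point part
  set rv : Fin n → ℝ := fun i => (v i : ℝ) with hrv
  set img : Set (Fin n → ℝ) := (fun (x : Fin n → ℤ) (i : Fin n) => (x i : ℝ)) '' C with himg
  set O : Set (Fin n → ℝ) := {x : Fin n → ℝ | ∀ i, 0 ≤ x i} with hO
  set A : Set (Fin n → ℝ) := img + O with hA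
  -- weight functions
  set w0 : Fin n → ℝ := fun k => if k = p then 1 else if k = q then 1 else 2 with hw0
  set w1 : Fin n → ℝ := fun k => if k = p then 0 else if k = q then 1 else 2 with hw1
  set w2 : Fin n → ℝ := fun k => if k = p then 1 else if k = q then 0 else 2 with hw2
  have genbound : ∀ (w : Fin n → ℝ) (a : ℝ), (∀ k, 0 ≤ w k) →
      (∀ i ∈ I, ∀ j ∈ J, a ≤ w i + w j) → ∀ x ∈ A, a ≤ ∑ k, w k * x k := by
    intro w a hw hwij x hx
    rw [hA, Set.mem_add] at hx
    obtain ⟨z, hz, r, hr, rfl⟩ := hx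
    obtain ⟨u, ⟨i, hi, j, hj, rfl⟩, rfl⟩ := hz
    have h1 : ∑ k, w k * ((fun (x : Fin n → ℤ) (i : Fin n) => (x i : ℝ)) (Pi.single i (1:ℤ) + Pi.single j 1)) k = w i + w j := wsum_pair w i j
    have h2 : (0:ℝ) ≤ ∑ k, w k * r k :=
      Finset.sum_nonneg fun k _ => mul_nonneg (hw k) (hr k)
    calc a ≤ w i + w j := hwij i hi j hj
    _ ≤ _ := by
        rw [show (∑ k, w k * (((fun (x : Fin n → ℤ) (i : Fin n) => (x i : ℝ)) (Pi.single i (1:ℤ) + Pi.single j 1)) + r) k) = (∑ k, w k * ((fun (x : Fin n → ℤ) (i : Fin n) => (x i : ℝ)) (Pi.single i (1:ℤ) + Pi.single j 1)) k) + ∑ k, w k * r k from by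
          simp [mul_add, Finset.sum_add_distrib]]
        rw [h1]; linarith
  have b0 : ∀ x ∈ convexHull ℝ A, 2 ≤ ∑ k, w0 k * x k := by
    apply hull_bound
    apply genbound
    · intro k; simp only [hw0]; split_ifs <;> norm_num
    · intro i hi j hj
      have h1 : (1:ℝ) ≤ w0 i := by simp only [hw0]; split_ifs <;> norm_num
      have h2 : (1:ℝ) ≤ w0 j := by simp only [hw0]; split_ifs <;> norm_num
      linarith
  have b1 : ∀ x ∈ convexHull ℝ A, 1 ≤ ∑ k, w1 k * x k := by
    apply hull_bound
    apply genbound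
    · intro k; simp only [hw1]; split_ifs <;> norm_num
    · intro i hi j hj
      have hjp : j ≠ p := fun h => hpJ (h ▸ hj)
      have h1 : (0:ℝ) ≤ w1 i := by simp only [hw1]; split_ifs <;> norm_num
      have h2 : (1:ℝ) ≤ w1 j := by simp only [hw1]; split_ifs <;> simp_all <;> norm_num
      linarith
  have b2 : ∀ x ∈ convexHull ℝ A, 1 ≤ ∑ k, w2 k * x k := by
    apply hull_bound
    apply genbound
    · intro k; simp only [hw2]; split_ifs <;> norm_num
    · intro i hi j hj
      have hiq : i ≠ q := fun h => hqI (h ▸ hi)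
      have h1 : (1:ℝ) ≤ w2 i := by simp only [hw2]; split_ifs <;> first | norm_num | exact absurd ‹i = q› hiq
      have h2 : (0:ℝ) ≤ w2 j := by simp only [hw2]; split_ifs <;> norm_num
      linarith
  have bcoord : ∀ m : Fin n, ∀ x ∈ convexHull ℝ A, 0 ≤ x m := by
    intro m
    have hconv : Convex ℝ {x : Fin n → ℝ | 0 ≤ x m} :=
      convex_halfSpace_ge ⟨fun a b => rfl, fun c a => rfl⟩ 0
    intro x hx
    refine convexHull_min ?_ hconv hx
    intro y hy
    rw [hA, Set.mem_add] at hy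
    obtain ⟨z, hz, r, hr, rfl⟩ := hy
    obtain ⟨u, ⟨i, hi, j, hj, rfl⟩, rfl⟩ := hz
    simp only [Set.mem_setOf_eq, Pi.add_apply]
    push_cast
    simp only [Pi.single_apply]
    have := hr m
    split_ifs <;> push_cast <;> linarith
  -- values at rv
  have rv_eval : ∀ w : Fin n → ℝ, ∑ k, w k * rv k = w p + w q := by
    intro w
    exact wsum_pair w p q
  have hrvA : rv ∈ A := by
    rw [hA]
    have : rv = ((fun (x : Fin n → ℤ) (i : Fin n) => (x i : ℝ)) v) + 0 := by
      funext k; simp [hrv]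
    rw [this]
    exact Set.add_mem_add ⟨v, ⟨p, hpI, q, hqJ, rfl⟩, rfl⟩ (fun i => le_refl 0)
  rw [mem_extremePoints]
  refine ⟨subset_convexHull ℝ A hrvA, ?_⟩
  intro x hx y hy hseg
  obtain ⟨a, b, ha, hb, hab, hsum⟩ := hseg
  -- combo values
  have hval : ∀ (w : Fin n → ℝ) (m : ℝ), (∀ z ∈ convexHull ℝ A, m ≤ ∑ k, w k * z k) →
      (w p + w q = m) → (∑ k, w k * x k = m ∧ ∑ k, w k * y k = m) := by
    intro w m hbd hm
    have hcomb : a * (∑ k, w k * x k) + b * (∑ k, w k * y k) = m := by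
      have h1 : (∑ k, w k * (a • x + b • y) k) = a * (∑ k, w k * x k) + b * (∑ k, w k * y k) := by
        rw [Finset.mul_sum, Finset.mul_sum, ← Finset.sum_add_distrib]
        apply Finset.sum_congr rfl; intro k _
        simp only [Pi.add_apply, Pi.smul_apply, smul_eq_mul]; ring
      rw [hsum] at h1
      rw [← h1, rv_eval w, hm]
    exact eq_of_combo ha hb hab hcomb (hbd x hx) (hbd y hy)
  have hw0v : w0 p + w0 q = 2 := by norm_num [hw0, hpq, hpq.symm]
  have hw1v : w1 p + w1 q = 1 := by norm_num [hw1, hpq, hpq.symm]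
  have hw2v : w2 p + w2 q = 1 := by norm_num [hw2, hpq, hpq.symm]
  obtain ⟨hx0, hy0⟩ := hval w0 2 b0 hw0v
  obtain ⟨hx1, hy1⟩ := hval w1 1 b1 hw1v
  obtain ⟨hx2, hy2⟩ := hval w2 1 b2 hw2v
  -- deduce coordinates
  have coords : ∀ z : Fin n → ℝ, (∀ m, 0 ≤ z m) → (∑ k, w0 k * z k = 2) →
      (∑ k, w1 k * z k = 1) → (∑ k, w2 k * z k = 1) → z = rv := by
    intro z hz h0 h1 h2
    have hzp : z p = 1 := by
      have hd : ∑ k, (w0 k - w1 k) * z k = ∑ k, w0 k * z k - ∑ k, w1 k * z k := by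
        rw [← Finset.sum_sub_distrib]; exact Finset.sum_congr rfl fun k _ => by ring
      have h3 : ∑ k, (w0 k - w1 k) * z k = z p := by
        have e : ∀ k, (w0 k - w1 k) * z k = if k = p then z p else 0 := by
          intro k
          by_cases h : k = p
          · subst h; simp [hw0, hw1]
          · simp only [hw0, hw1, if_neg h, if_pos]
            split_ifs <;> ring
        rw [Finset.sum_congr rfl fun k _ => e k]
        simp
      rw [hd, h0, h1] at h3; linarith
    have hzq : z q = 1 := by
      have hd : ∑ k, (w0 k - w2 k) * z k = ∑ k, w0 k * z k - ∑ k, w2 k * z k := by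
        rw [← Finset.sum_sub_distrib]; exact Finset.sum_congr rfl fun k _ => by ring
      have h3 : ∑ k, (w0 k - w2 k) * z k = z q := by
        have e : ∀ k, (w0 k - w2 k) * z k = if k = q then z q else 0 := by
          intro k
          by_cases h : k = q
          · subst h; simp [hw0, hw2, hpq.symm]
          · simp only [hw0, hw2, if_neg h]
            split_ifs <;> ring
        rw [Finset.sum_congr rfl fun k _ => e k]
        simp
      rw [hd, h0, h2] at h3; linarith
    have hrest : ∀ m, m ≠ p → m ≠ q → z m = 0 := by
      intro m hmp hmq
      have hqmem : q ∈ Finset.univ.erase p := Finset.mem_erase.2 ⟨hpq.symm, Finset.mem_univ q⟩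
      have split1 : ∑ k, w0 k * z k
          = w0 p * z p + (w0 q * z q + ∑ k ∈ (Finset.univ.erase p).erase q, w0 k * z k) := by
        rw [← Finset.add_sum_erase _ _ (Finset.mem_univ p), ← Finset.add_sum_erase _ _ hqmem]
      have hw0p : w0 p = 1 := by simp [hw0]
      have hw0q : w0 q = 1 := by simp [hw0, hpq.symm]
      have hrest0 : ∑ k ∈ (Finset.univ.erase p).erase q, w0 k * z k = 0 := by
        rw [h0, hw0p, hw0q, hzp, hzq] at split1; linarith
      have hnn : ∀ k ∈ (Finset.univ.erase p).erase q, 0 ≤ w0 k * z k := by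
        intro k _
        apply mul_nonneg _ (hz k)
        simp only [hw0]; split_ifs <;> norm_num
      have hmem : m ∈ (Finset.univ.erase p).erase q :=
        Finset.mem_erase.2 ⟨hmq, Finset.mem_erase.2 ⟨hmp, Finset.mem_univ m⟩⟩
      have := (Finset.sum_eq_zero_iff_of_nonneg hnn).1 hrest0 m hmem
      have hw0m : w0 m = 2 := by simp [hw0, hmp, hmq]
      rw [hw0m] at this; linarith
    funext m
    by_cases hmp : m = p
    · subst hmp; simp [hrv, hv, Pi.single_apply, hpq, hzp]
    by_cases hmq : m = q
    · subst hmq; simp [hrv, hv, Pi.single_apply, hpq.symm, hzq]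
    · simp [hrv, hv, Pi.single_apply, hmp, hmq, hrest m hmp hmq]
  have hxv := coords x (fun m => bcoord m x hx) hx0 hx1 hx2
  have hyv := coords y (fun m => bcoord m y hy) hy0 hy1 hy2
  exact ⟨hxv, hyv⟩
end

section
/- Let I, J ⊆ {1,...,n} with I ⊆ J and J = {1,...,n}. Then every vertex v of the Newton polyhedron of the product of coordinate ideals (x_i : i ∈ I)·(x_j : j ∈ J) has a simplicial ideal tangent cone, i.e., the minimal generating set of IT_v has exactly n elements forming a ℤ-basis of ℤ^n. -/
open Pointwise

private lemma notMemClosure {α : Type*} [AddCommMonoid α] (f : α →+ ℤ)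
    {T : Set α} (hT : ∀ t ∈ T, f t ≤ 0) {s : α} (hs : 0 < f s) :
    s ∉ AddSubmonoid.closure T := by
  intro h
  let M : AddSubmonoid α :=
    { carrier := {x | f x ≤ 0}
      zero_mem' := by simp
      add_mem' := fun ha hb => by
        simp only [Set.mem_setOf_eq, map_add] at *
        omega }
  have hM : s ∈ M := AddSubmonoid.closure_le.2 (fun t ht => hT t ht) h
  exact hs.not_ge hM

/-- For coordinate ideals with index sets `I ⊆ J = {1,…,n}`, every vertex of the
Newton polyhedron of the product has a simplicial ideal tangent cone: its (unique)
minimal generating set has exactly `n` elements and forms a ℤ-basis of `ℤⁿ`. -/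
theorem stmt_14 {n : ℕ} (I : Finset (Fin n)) (hI : I.Nonempty)
    (C : Set (Fin n → ℤ))
    (hC : C = {x | ∃ i ∈ I, ∃ j : Fin n, x = Pi.single i (1 : ℤ) + Pi.single j 1})
    (v : Fin n → ℤ) (hvC : v ∈ C)
    (hvert : (fun i => (v i : ℝ)) ∈ Set.extremePoints ℝ (convexHull ℝ
      ((fun (x : Fin n → ℤ) (i : Fin n) => (x i : ℝ)) '' C
        + {x : Fin n → ℝ | ∀ i, 0 ≤ x i}))) :
    ∃ S : Finset (Fin n → ℤ), S.card = n ∧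
      AddSubmonoid.closure (S : Set (Fin n → ℤ)) = AddSubmonoid.closure
        ({w | ∃ x ∈ C, x ≠ v ∧ w = x - v} ∪ Set.range (fun i => Pi.single i (1 : ℤ))) ∧
      (∀ s ∈ S, s ∉ AddSubmonoid.closure ((S.erase s : Finset (Fin n → ℤ)) : Set (Fin n → ℤ))) ∧
      Submodule.span ℤ (S : Set (Fin n → ℤ)) = ⊤ ∧
      LinearIndependent ℤ (fun x : {x // x ∈ S} => (x : Fin n → ℤ)) := by
  classical
  subst hC
  obtain ⟨i, hiI, j, hv⟩ := hvC
  have happly : ∀ k l : Fin n, (Pi.single k 1 : Fin n → ℤ) l = if l = k then 1 else 0 :=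
    fun k l => by rw [Pi.single_apply]
  -- Step 1 : j = i ∨ j ∉ I
  have hij : j = i ∨ j ∉ I := by
    by_contra h
    push_neg at h
    obtain ⟨hji, hjI⟩ := h
    set A := convexHull ℝ
      ((fun (x : Fin n → ℤ) (i : Fin n) => (x i : ℝ)) ''
        {x | ∃ i ∈ I, ∃ j : Fin n, x = Pi.single i (1 : ℤ) + Pi.single j 1}
        + {x : Fin n → ℝ | ∀ i, 0 ≤ x i}) with hA
    have hmem : ∀ y : Fin n → ℤ,
        y ∈ {x | ∃ i ∈ I, ∃ j : Fin n, x = Pi.single i (1 : ℤ) + Pi.single j 1} →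
        (fun l => (y l : ℝ)) ∈ A := by
      intro y hy
      apply subset_convexHull ℝ _
      have := Set.add_mem_add (Set.mem_image_of_mem
        (fun (x : Fin n → ℤ) (i : Fin n) => (x i : ℝ)) hy)
        (show (0 : Fin n → ℝ) ∈ {x : Fin n → ℝ | ∀ i, 0 ≤ x i} from fun _ => le_refl 0)
      simpa using this
    have hx1 : (fun l => ((Pi.single i 1 + Pi.single i 1 : Fin n → ℤ) l : ℝ)) ∈ A :=
      hmem _ ⟨i, hiI, i, rfl⟩
    have hx2 : (fun l => ((Pi.single j 1 + Pi.single j 1 : Fin n → ℤ) l : ℝ)) ∈ A :=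
      hmem _ ⟨j, hjI, j, rfl⟩
    have hseg : (fun l => (v l : ℝ)) ∈ openSegment ℝ
        (fun l => ((Pi.single i 1 + Pi.single i 1 : Fin n → ℤ) l : ℝ))
        (fun l => ((Pi.single j 1 + Pi.single j 1 : Fin n → ℤ) l : ℝ)) := by
      refine ⟨1/2, 1/2, by norm_num, by norm_num, by norm_num, ?_⟩
      funext l
      simp only [hv, Pi.add_apply, Pi.smul_apply, smul_eq_mul, happly]
      push_cast
      split_ifs <;> norm_num
    have := hvert.2 hx1 hx2 hseg
    have hj := congrFun this j
    simp only [hv, Pi.add_apply, happly, if_neg hji] at hj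
    simp at hj
  -- definitions
  set q : Fin n → Fin n := fun k => if k ∈ I ∧ k ≠ i then i else j with hq
  have hqval : ∀ k, q k = i ∨ q k = j := by
    intro k; by_cases h : k ∈ I ∧ k ≠ i <;> simp [hq, h]
  have hqne : ∀ k, k ≠ j → q k ≠ k := by
    intro k hk
    by_cases h : k ∈ I ∧ k ≠ i
    · simp only [hq, if_pos h]; exact fun he => h.2 he.symm
    · simp only [hq, if_neg h]; exact fun he => hk he.symm
  set b : Fin n → (Fin n → ℤ) := fun k =>
    if k = j then Pi.single j 1 else Pi.single k 1 - Pi.single (q k) 1 with hb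
  have hbjj : b j = Pi.single j 1 := by simp [hb]
  have hbne : ∀ k, k ≠ j → b k = Pi.single k 1 - Pi.single (q k) 1 := by
    intro k hk; simp [hb, hk]
  have hbkk : ∀ k, k ≠ j → b k k = 1 := by
    intro k hk
    rw [hbne k hk]
    simp [happly, if_neg (Ne.symm (hqne k hk))]
  have hbinj : Function.Injective b := by
    intro k k' h
    by_contra hne
    by_cases hk : k = j
    · have hk' : k' ≠ j := fun h' => hne (hk.trans h'.symm)
      have h1 := congrFun h k'
      rw [hbkk k' hk', hk, hbjj, happly, if_neg hk'] at h1
      exact absurd h1 (by norm_num)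
    · by_cases hk' : k' = j
      · have h1 := congrFun h k
        rw [hbkk k hk, hk', hbjj, happly, if_neg hk] at h1
        exact absurd h1 (by norm_num)
      · have h1 := congrFun h k
        rw [hbkk k hk, hbne k' hk'] at h1
        simp only [Pi.sub_apply, happly] at h1
        rw [if_neg (fun h2 : k = k' => hne h2)] at h1
        split_ifs at h1 <;> omega
  -- membership helpers in the closure of S
  have hS : ∀ k, k ≠ j → (Pi.single k 1 - Pi.single (q k) 1 : Fin n → ℤ) ∈
      AddSubmonoid.closure ((Finset.univ.image b : Finset (Fin n → ℤ)) : Set (Fin n → ℤ)) := by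
    intro k hk
    apply AddSubmonoid.subset_closure
    rw [Finset.coe_image, Finset.coe_univ, Set.image_univ]
    exact ⟨k, hbne k hk⟩
  have hjS : (Pi.single j 1 : Fin n → ℤ) ∈
      AddSubmonoid.closure ((Finset.univ.image b : Finset (Fin n → ℤ)) : Set (Fin n → ℤ)) := by
    apply AddSubmonoid.subset_closure
    rw [Finset.coe_image, Finset.coe_univ, Set.image_univ]
    exact ⟨j, hbjj⟩
  have hiS : (Pi.single i 1 : Fin n → ℤ) ∈
      AddSubmonoid.closure ((Finset.univ.image b : Finset (Fin n → ℤ)) : Set (Fin n → ℤ)) := by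
    by_cases hijq : i = j
    · rw [hijq]; exact hjS
    · have hqi : q i = j := by simp [hq]
      have h2 := add_mem (hS i hijq) hjS
      rw [hqi] at h2
      simpa using h2
  have hsub : ∀ l, (Pi.single l 1 : Fin n → ℤ) ∈
      AddSubmonoid.closure ((Finset.univ.image b : Finset (Fin n → ℤ)) : Set (Fin n → ℤ)) := by
    intro l
    by_cases hl : l = j
    · rw [hl]; exact hjS
    · have h2 : (Pi.single (q l) 1 : Fin n → ℤ) ∈
          AddSubmonoid.closure ((Finset.univ.image b : Finset (Fin n → ℤ)) : Set (Fin n → ℤ)) :=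
        (hqval l).elim (fun h => h ▸ hiS) (fun h => h ▸ hjS)
      have h3 := add_mem (hS l hl) h2
      simpa using h3
  have hAmem : ∀ i', i' ∈ I → (Pi.single i' 1 - Pi.single i 1 : Fin n → ℤ) ∈
      AddSubmonoid.closure ((Finset.univ.image b : Finset (Fin n → ℤ)) : Set (Fin n → ℤ)) := by
    intro i' hi'
    by_cases h : i' = i
    · rw [h]; simpa using zero_mem _
    · have hi'j : i' ≠ j := by
        rcases hij with hji | hjI
        · rw [hji]; exact h
        · exact fun he => hjI (he ▸ hi')
      have hqi' : q i' = i := by simp [hq, hi', h]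
      have h2 := hS i' hi'j
      rwa [hqi'] at h2
  have hijS : (Pi.single i 1 - Pi.single j 1 : Fin n → ℤ) ∈
      AddSubmonoid.closure ((Finset.univ.image b : Finset (Fin n → ℤ)) : Set (Fin n → ℤ)) := by
    by_cases hijq : i = j
    · rw [hijq]; simpa using zero_mem _
    · have hqi : q i = j := by simp [hq]
      have h2 := hS i hijq
      rwa [hqi] at h2
  have hBmem : ∀ j', (Pi.single j' 1 - Pi.single j 1 : Fin n → ℤ) ∈
      AddSubmonoid.closure ((Finset.univ.image b : Finset (Fin n → ℤ)) : Set (Fin n → ℤ)) := by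
    intro j'
    by_cases hjj : j' = j
    · rw [hjj]; simpa using zero_mem _
    · by_cases h : j' ∈ I ∧ j' ≠ i
      · have h2 := add_mem (hAmem j' h.1) hijS
        rwa [sub_add_sub_cancel] at h2
      · have hqj' : q j' = j := by
          show q j' = j
          simp only [hq]
          exact if_neg h
        have h2 := hS j' hjj
        rwa [hqj'] at h2
  refine ⟨Finset.univ.image b, ?_, ?_, ?_, ?_, ?_⟩
  · rw [Finset.card_image_of_injective _ hbinj, Finset.card_univ, Fintype.card_fin]
  · -- closure equality
    apply le_antisymm
    · rw [AddSubmonoid.closure_le]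
      intro s hs
      rw [Finset.coe_image, Finset.coe_univ, Set.image_univ] at hs
      obtain ⟨k, rfl⟩ := hs
      by_cases hk : k = j
      · exact AddSubmonoid.subset_closure (Set.mem_union_right _ ⟨j, by rw [hk, hbjj]⟩)
      · rw [hbne k hk]
        by_cases h : k ∈ I ∧ k ≠ i
        · have hqk : q k = i := by simp [hq, h]
          refine AddSubmonoid.subset_closure (Set.mem_union_left _
            ⟨Pi.single k 1 + Pi.single j 1, ⟨k, h.1, j, rfl⟩, ?_, ?_⟩)
          · intro he
            have h1 := congrFun he k
            simp only [hv, Pi.add_apply, happly] at h1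
            simp [if_neg h.2, if_neg hk] at h1
          · rw [hv, hqk]; abel
        · have hqk : q k = j := by
            show q k = j
            simp only [hq]
            exact if_neg h
          refine AddSubmonoid.subset_closure (Set.mem_union_left _
            ⟨Pi.single i 1 + Pi.single k 1, ⟨i, hiI, k, rfl⟩, ?_, ?_⟩)
          · intro he
            have h1 := congrFun he k
            simp only [hv, Pi.add_apply, happly] at h1
            simp [if_neg hk] at h1
          · rw [hv, hqk]; abel
    · rw [AddSubmonoid.closure_le]
      rintro w (⟨x, hx, hxv, rfl⟩ | ⟨l, rfl⟩)
      · obtain ⟨i', hi', j', rfl⟩ := hx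
        have heq : Pi.single i' (1:ℤ) + Pi.single j' 1 - v
            = (Pi.single i' 1 - Pi.single i 1) + (Pi.single j' 1 - Pi.single j 1) := by
          rw [hv]; abel
        rw [heq]
        exact add_mem (hAmem i' hi') (hBmem j')
      · exact hsub l
  · -- minimality
    intro s hs
    rw [Finset.mem_image] at hs
    obtain ⟨k, -, rfl⟩ := hs
    by_cases hk : k = j
    · refine notMemClosure (∑ l : Fin n, Pi.evalAddMonoidHom (fun _ : Fin n => ℤ) l) ?_ ?_
      · intro t ht
        rw [Finset.mem_coe, Finset.mem_erase] at ht
        obtain ⟨htne, htS⟩ := ht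
        rw [Finset.mem_image] at htS
        obtain ⟨k', -, rfl⟩ := htS
        have hk' : k' ≠ j := by
          intro h
          exact htne (by rw [h, hk])
        rw [hbne k' hk']
        rw [AddMonoidHom.finset_sum_apply]
        simp [Pi.evalAddMonoidHom, happly]
      · rw [hk, hbjj, AddMonoidHom.finset_sum_apply]
        simp [Pi.evalAddMonoidHom, happly]
    · refine notMemClosure (Pi.evalAddMonoidHom (fun _ : Fin n => ℤ) k) ?_ ?_
      · intro t ht
        rw [Finset.mem_coe, Finset.mem_erase] at ht
        obtain ⟨htne, htS⟩ := ht
        rw [Finset.mem_image] at htS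
        obtain ⟨k', -, rfl⟩ := htS
        have hne' : k' ≠ k := fun h => htne (by rw [h])
        by_cases hk' : k' = j
        · rw [hk', hbjj]
          simp [Pi.evalAddMonoidHom, happly, hk]
        · rw [hbne k' hk']
          have h1 : k ≠ k' := Ne.symm hne'
          simp only [Pi.evalAddMonoidHom, AddMonoidHom.coe_mk, ZeroHom.coe_mk,
            Pi.sub_apply, happly]
          rw [if_neg h1]
          split_ifs <;> omega
      · have h1 := hbkk k hk
        simp only [Pi.evalAddMonoidHom, AddMonoidHom.coe_mk, ZeroHom.coe_mk]
        rw [h1]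
        norm_num
  · -- span
    apply le_antisymm le_top
    rw [← (Pi.basisFun ℤ (Fin n)).span_eq, Submodule.span_le]
    rintro x ⟨k, rfl⟩
    rw [Pi.basisFun_apply]
    have hmono : AddSubmonoid.closure
        ((Finset.univ.image b : Finset (Fin n → ℤ)) : Set (Fin n → ℤ)) ≤
        (Submodule.span ℤ
          ((Finset.univ.image b : Finset (Fin n → ℤ)) : Set (Fin n → ℤ))).toAddSubmonoid :=
      AddSubmonoid.closure_le.2 Submodule.subset_span
    exact hmono (hsub k)
  · -- linear independence
    have hbli : LinearIndependent ℤ b := by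
      rw [Fintype.linearIndependent_iff]
      intro g hg
      have hl : ∀ l, ∑ k, g k * b k l = 0 := by
        intro l
        have h1 := congrFun hg l
        simpa [Finset.sum_apply] using h1
      have hA0 : ∀ l, l ≠ i → l ≠ j → g l = 0 := by
        intro l hli hlj
        have h0 := hl l
        rw [Finset.sum_eq_single l ?off ?nomem] at h0
        case nomem => simp
        case off =>
          intro k _ hkl
          by_cases hkj : k = j
          · rw [hkj, hbjj, happly, if_neg hlj, mul_zero]
          · rw [hbne k hkj]
            have h1 : l ≠ k := Ne.symm hkl
            have h2 : l ≠ q k := by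
              rcases hqval k with h | h <;> rw [h] <;> assumption
            simp [happly, if_neg h1, if_neg h2]
        rw [hbkk l hlj, mul_one] at h0
        exact h0
      have hB0 : ∀ (_ : i ≠ j), g i = 0 := by
        intro hij2
        have hjI : j ∉ I := hij.resolve_left (fun h => hij2 h.symm)
        have h0 := hl i
        rw [Finset.sum_eq_single i ?off ?nomem] at h0
        case nomem => simp
        case off =>
          intro k _ hki
          by_cases hkj : k = j
          · rw [hkj, hbjj, happly, if_neg hij2, mul_zero]
          · rw [hbne k hkj]
            by_cases hqk : q k = i
            · have hkI : k ∈ I ∧ k ≠ i := by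
                by_contra hcon
                rw [show q k = j from by simp only [hq]; exact if_neg hcon] at hqk
                exact hij2 hqk.symm
              rw [hA0 k hkI.2 hkj, zero_mul]
            · have h1 : i ≠ k := Ne.symm hki
              have h2 : i ≠ q k := Ne.symm hqk
              simp [happly, if_neg h1, if_neg h2]
        rw [hbkk i hij2, mul_one] at h0
        exact h0
      have hC0 : g j = 0 := by
        have h0 := hl j
        rw [Finset.sum_eq_single j ?off ?nomem] at h0
        case nomem => simp
        case off =>
          intro k _ hkj
          rw [hbne k hkj]
          by_cases hki : k = i
          · rw [hki, hB0 (hki ▸ hkj), zero_mul]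
          · rw [hA0 k hki hkj, zero_mul]
        rw [hbjj, happly, if_pos rfl, mul_one] at h0
        exact h0
      intro k
      by_cases hk : k = j
      · rw [hk]; exact hC0
      · by_cases hki : k = i
        · rw [hki]; exact hB0 (fun h => hk (hki.trans h))
        · exact hA0 k hki hk
    have hrange : ((Finset.univ.image b : Finset (Fin n → ℤ)) : Set (Fin n → ℤ))
        = Set.range b := by
      rw [Finset.coe_image, Finset.coe_univ, Set.image_univ]
    have h2 := hbli.linearIndepOn_id
    have h3 : LinearIndependent ℤ
        (Subtype.val : ((Finset.univ.image b : Finset (Fin n → ℤ)) : Set (Fin n → ℤ)) → (Fin n → ℤ)) := by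
      rw [hrange]; exact h2
    exact h3
end

section
/- Every vertex of the Newton polyhedron of the permutohedral ideal I_{n,2} = ∏_{1≤i<j≤n}(x_i, x_j) is a permutation of the vector (n-1, n-2, ..., 1, 0). Equivalently: the extreme points of conv(C + ℝ≥0^n), where C is the set of all vectors obtainable by choosing for each pair {i,j} one of e_i, e_j and summing, are exactly the n! permutations of (n-1, ..., 1, 0). -/
open Pointwise

namespace Stmt15Aux

variable {n : ℕ}

abbrev Pr (n : ℕ) := {p : Fin n × Fin n // p.1 < p.2}

def pr {i j : Fin n} (h : i ≠ j) : Pr n :=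
  if hlt : i < j then ⟨(i, j), hlt⟩ else ⟨(j, i), h.lt_or_gt.resolve_left hlt⟩

lemma pr_symm {i j : Fin n} (h : i ≠ j) : pr h = pr h.symm := by
  unfold pr
  rcases lt_trichotomy i j with h1 | h1 | h1
  · rw [dif_pos h1, dif_neg (asymm h1)]
  · exact absurd h1 h
  · rw [dif_neg (asymm h1), dif_pos h1]

lemma pr_val {i j : Fin n} (h : i ≠ j) : (pr h).1 = (i, j) ∨ (pr h).1 = (j, i) := by
  unfold pr; split_ifs <;> simp

lemma pr_of_val {i j : Fin n} (h : i ≠ j) (e : Pr n) (he : e.1 = (i, j) ∨ e.1 = (j, i)) :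
    e = pr h := by
  have h2 := e.2
  unfold pr
  rcases he with he | he <;> rw [he] at h2 <;> apply Subtype.ext <;> rw [he] <;> simp at h2 ⊢
  · rw [dif_pos h2]
  · rw [dif_neg (asymm h2)]

section
variable (f : Pr n → Fin n)

noncomputable def deg (i : Fin n) : ℕ := (Finset.univ.filter fun e : Pr n => f e = i).card

open Classical in
noncomputable def N (i : Fin n) : Finset (Fin n) :=
  Finset.univ.filter fun j => ∃ h : i ≠ j, f (pr h) = i

lemma mem_N {i j : Fin n} : j ∈ N f i ↔ ∃ h : i ≠ j, f (pr h) = i := by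
  classical
  simp [N]

lemma sum_single_apply (i : Fin n) :
    (∑ e : Pr n, Pi.single (f e) (1 : ℝ) : Fin n → ℝ) i = (deg f i : ℝ) := by
  classical
  simp only [Finset.sum_apply]
  have h1 : ∀ e : Pr n, (Pi.single (f e) (1:ℝ) : Fin n → ℝ) i = if f e = i then 1 else 0 := by
    intro e; simp [Pi.single_apply, eq_comm]
  rw [Finset.sum_congr rfl (fun e _ => h1 e), Finset.sum_boole, deg]

lemma f_pr_or (hf : ∀ e : Pr n, f e = e.1.1 ∨ f e = e.1.2) {i j : Fin n} (h : i ≠ j) :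
    f (pr h) = i ∨ f (pr h) = j := by
  rcases pr_val h with hv | hv <;> rcases hf (pr h) with h1 | h1 <;> rw [hv] at h1 <;>
    simp at h1 <;> tauto

lemma deg_eq_card_N (hf : ∀ e : Pr n, f e = e.1.1 ∨ f e = e.1.2) (i : Fin n) :
    deg f i = (N f i).card := by
  classical
  refine Finset.card_bij' (fun e _ => if e.1.1 = i then e.1.2 else e.1.1)
    (fun j hj => pr ((mem_N f).mp hj).choose) ?_ ?_ ?_ ?_
  · intro e he
    try dsimp only
    rw [Finset.mem_filter] at he
    have hfe : f e = i := he.2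
    rcases hf e with h1 | h1
    · have h11 : e.1.1 = i := by rw [← h1, hfe]
      have hne : i ≠ e.1.2 := by rw [← h11]; exact ne_of_lt e.2
      rw [if_pos h11, mem_N]
      refine ⟨hne, ?_⟩
      rw [← pr_of_val hne e (Or.inl (by rw [← h11]))]
      exact hfe
    · have h12 : e.1.2 = i := by rw [← h1, hfe]
      have hne : i ≠ e.1.1 := by rw [← h12]; exact (ne_of_lt e.2).symm
      have h11i : ¬ (e.1.1 = i) := fun hh => hne hh.symm
      rw [if_neg h11i, mem_N]
      refine ⟨hne, ?_⟩
      rw [← pr_of_val hne e (Or.inr (by rw [← h12]))]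
      exact hfe
  · intro j hj
    rw [Finset.mem_filter]
    exact ⟨Finset.mem_univ _, ((mem_N f).mp hj).choose_spec⟩
  · intro e he
    try dsimp only
    rw [Finset.mem_filter] at he
    have hfe : f e = i := he.2
    symm
    rcases hf e with h1 | h1
    · have h11 : e.1.1 = i := by rw [← h1, hfe]
      apply pr_of_val _ e
      rw [if_pos h11]
      exact Or.inl (by rw [← h11])
    · have h12 : e.1.2 = i := by rw [← h1, hfe]
      have hne : i ≠ e.1.1 := by rw [← h12]; exact (ne_of_lt e.2).symm
      have h11i : ¬ (e.1.1 = i) := fun hh => hne hh.symm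
      apply pr_of_val _ e
      rw [if_neg h11i]
      exact Or.inr (by rw [← h12])
  · intro j hj
    try dsimp only
    have hne : i ≠ j := ((mem_N f).mp hj).choose
    rcases pr_val hne with hv | hv <;> rw [hv] <;> simp [Ne.symm hne]

lemma deg_le (hf : ∀ e : Pr n, f e = e.1.1 ∨ f e = e.1.2) (i : Fin n) :
    deg f i ≤ n - 1 := by
  classical
  rw [deg_eq_card_N f hf]
  have hsub : N f i ⊆ Finset.univ.erase i := by
    intro j hj
    rcases (mem_N f).mp hj with ⟨h, _⟩
    exact Finset.mem_erase.mpr ⟨h.symm, Finset.mem_univ _⟩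
  calc (N f i).card ≤ (Finset.univ.erase i).card := Finset.card_le_card hsub
    _ = n - 1 := by rw [Finset.card_erase_of_mem (Finset.mem_univ _), Finset.card_univ,
        Fintype.card_fin]

lemma deg_lt (hf : ∀ e : Pr n, f e = e.1.1 ∨ f e = e.1.2) (i : Fin n) :
    deg f i < n :=
  lt_of_le_of_lt (deg_le f hf i) (Nat.sub_lt i.pos one_pos)

lemma N_ssubset (hf : ∀ e : Pr n, f e = e.1.1 ∨ f e = e.1.2)
    (H : ∀ (a b c : Fin n) (hab : a ≠ b) (hbc : b ≠ c) (hca : c ≠ a),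
      ¬(f (pr hab) = a ∧ f (pr hbc) = b ∧ f (pr hca) = c))
    {i j : Fin n} (hij : i ≠ j) (hfij : f (pr hij) = i) :
    deg f j < deg f i := by
  classical
  rw [deg_eq_card_N f hf, deg_eq_card_N f hf]
  have hsub : N f j ⊆ N f i := by
    intro k hk
    rcases (mem_N f).mp hk with ⟨hjk, hfjk⟩
    have hik : i ≠ k := by
      rintro rfl
      have : pr hjk = pr hij := by rw [pr_symm hjk]
      rw [this, hfij] at hfjk
      exact hij hfjk
    have hki : k ≠ i := hik.symm
    have hH := H i j k hij hjk hki
    have h3 : f (pr hki) ≠ k := fun hc => hH ⟨hfij, hfjk, hc⟩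
    have h4 : f (pr hki) = i := (f_pr_or f hf hki).resolve_left h3
    rw [mem_N]
    refine ⟨hik, ?_⟩
    rw [pr_symm hik]
    exact h4
  apply Finset.card_lt_card
  rw [Finset.ssubset_iff_of_subset hsub]
  refine ⟨j, (mem_N f).mpr ⟨hij, hfij⟩, ?_⟩
  intro hjmem
  rcases (mem_N f).mp hjmem with ⟨h, _⟩
  exact h rfl

lemma sum_update (e₀ : Pr n) (t : Fin n) :
    (∑ e : Pr n, Pi.single (Function.update f e₀ t e) (1 : ℝ) : Fin n → ℝ)
      = (∑ e : Pr n, Pi.single (f e) (1 : ℝ) : Fin n → ℝ) - Pi.single (f e₀) 1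
        + Pi.single t 1 := by
  classical
  have key : ∀ e : Pr n, (Pi.single (Function.update f e₀ t e) (1:ℝ) : Fin n → ℝ) =
      Function.update (fun e => (Pi.single (f e) (1:ℝ) : Fin n → ℝ)) e₀ (Pi.single t 1) e := by
    intro e
    by_cases h : e = e₀
    · subst h; simp
    · rw [Function.update_of_ne h, Function.update_of_ne h]
  rw [Finset.sum_congr rfl (fun e _ => key e), Finset.sum_update_of_mem (Finset.mem_univ e₀),
    Finset.sum_eq_sum_sdiff_singleton_add (Finset.mem_univ e₀)
      (fun e => (Pi.single (f e) (1:ℝ) : Fin n → ℝ))]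
  abel

end

def fperm (σ : Equiv.Perm (Fin n)) : Pr n → Fin n :=
  fun e => if σ e.1.1 < σ e.1.2 then e.1.1 else e.1.2

lemma fperm_good (σ : Equiv.Perm (Fin n)) :
    ∀ e : Pr n, fperm σ e = e.1.1 ∨ fperm σ e = e.1.2 := by
  intro e; unfold fperm; split_ifs <;> simp

lemma N_fperm (σ : Equiv.Perm (Fin n)) (i : Fin n) :
    N (fperm σ) i = Finset.univ.filter fun j => σ i < σ j := by
  classical
  ext j
  rw [mem_N, Finset.mem_filter]
  simp only [Finset.mem_univ, true_and]
  constructor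
  · rintro ⟨h, hfe⟩
    rcases pr_val h with hv | hv <;> rw [show fperm σ (pr h) =
        (if σ (pr h).1.1 < σ (pr h).1.2 then (pr h).1.1 else (pr h).1.2) from rfl, hv] at hfe <;>
      dsimp at hfe
    · by_contra hlt
      rw [if_neg hlt] at hfe
      exact h hfe.symm
    · by_cases hlt : σ j < σ i
      · rw [if_pos hlt] at hfe
        exact absurd hfe h.symm
      · rcases lt_or_eq_of_le (not_lt.mp hlt) with h2 | h2
        · exact h2
        · exact absurd (σ.injective h2) h
  · intro hlt
    have h : i ≠ j := fun hh => by rw [hh] at hlt; exact lt_irrefl _ hlt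
    refine ⟨h, ?_⟩
    rcases pr_val h with hv | hv <;> rw [show fperm σ (pr h) =
        (if σ (pr h).1.1 < σ (pr h).1.2 then (pr h).1.1 else (pr h).1.2) from rfl, hv] <;> dsimp
    · rw [if_pos hlt]
    · rw [if_neg (asymm hlt)]

lemma deg_fperm (σ : Equiv.Perm (Fin n)) (i : Fin n) :
    deg (fperm σ) i = n - 1 - σ i := by
  classical
  rw [deg_eq_card_N _ (fperm_good σ), N_fperm]
  have hbij : (Finset.univ.filter fun j => σ i < σ j).card
      = (Finset.univ.filter fun k : Fin n => σ i < k).card := by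
    refine Finset.card_bij (fun j _ => σ j) ?_ ?_ ?_
    · intro a ha
      rw [Finset.mem_filter] at ha ⊢
      exact ⟨Finset.mem_univ _, ha.2⟩
    · intro a _ b _ hab
      exact σ.injective hab
    · intro k hk
      rw [Finset.mem_filter] at hk
      exact ⟨σ.symm k, Finset.mem_filter.mpr ⟨Finset.mem_univ _, by simpa using hk.2⟩, by simp⟩
  rw [hbij]
  have : (Finset.univ.filter fun k : Fin n => σ i < k) = Finset.Ioi (σ i) := by
    ext k; simp
  rw [this, Fin.card_Ioi]

end Stmt15Aux

open Pointwise Stmt15Aux in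
/-- The vertices of the Newton polyhedron of the permutohedral ideal
`I_{n,2} = ∏_{i<j} (xᵢ, xⱼ)` are exactly the permutations of `(n-1, n-2, …, 1, 0)`. -/
theorem stmt_15 {n : ℕ}
    (C : Set (Fin n → ℝ))
    (hC : C = {x | ∃ f : {p : Fin n × Fin n // p.1 < p.2} → Fin n,
      (∀ e, f e = e.val.1 ∨ f e = e.val.2) ∧ x = ∑ e, Pi.single (f e) (1 : ℝ)}) :
    Set.extremePoints ℝ (convexHull ℝ (C + {x : Fin n → ℝ | ∀ i, 0 ≤ x i})) =
      {x | ∃ σ : Equiv.Perm (Fin n), x = fun i => (((n : ℤ) - 1 - (σ i : ℕ)) : ℝ)} := by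
  classical
  set Q : Set (Fin n → ℝ) := {x : Fin n → ℝ | ∀ i, 0 ≤ x i} with hQdef
  have hQ0 : (0 : Fin n → ℝ) ∈ Q := fun i => le_refl 0
  have hCS : C ⊆ C + Q := fun c hc => by
    rw [show c = c + 0 by rw [add_zero]]
    exact Set.add_mem_add hc hQ0
  ext x
  rw [mem_extremePoints]
  constructor
  · intro hx
    have hxS : x ∈ C + Q := extremePoints_convexHull_subset (mem_extremePoints.mpr hx)
    rw [Set.mem_add] at hxS
    obtain ⟨c, hc, q, hq, hsum⟩ := hxS
    have hq0 : q = 0 := by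
      by_contra hne
      obtain ⟨i0, hi0⟩ : ∃ i, 0 < q i := by
        by_contra hall
        push_neg at hall
        exact hne (funext fun i => le_antisymm (hall i) (hq i))
      have h1 : c ∈ convexHull ℝ (C + Q) := subset_convexHull ℝ _ (hCS hc)
      have h2q : (2:ℝ) • q ∈ Q := fun i => by
        have := hq i
        simp only [Pi.smul_apply, smul_eq_mul]
        linarith
      have h2 : c + (2:ℝ) • q ∈ convexHull ℝ (C + Q) :=
        subset_convexHull ℝ _ (Set.add_mem_add hc h2q)
      have hseg : x ∈ openSegment ℝ c (c + (2:ℝ) • q) := by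
        refine ⟨1/2, 1/2, by norm_num, by norm_num, by norm_num, ?_⟩
        rw [← hsum]
        funext i
        simp only [Pi.add_apply, Pi.smul_apply, smul_eq_mul]
        ring
      have hcx := (hx.2 c h1 _ h2 hseg).1
      rw [← hsum] at hcx
      have := congrFun hcx i0
      simp only [Pi.add_apply] at this
      linarith
    rw [hq0, add_zero] at hsum
    subst hsum
    rw [hC] at hc
    obtain ⟨f, hf, hcf⟩ := hc
    have H : ∀ (a b c' : Fin n) (hab : a ≠ b) (hbc : b ≠ c') (hca : c' ≠ a),
        ¬(f (pr hab) = a ∧ f (pr hbc) = b ∧ f (pr hca) = c') := by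
      rintro a b c' hab hbc hca ⟨h1, h2, h3⟩
      have mkC : ∀ (u v : Fin n) (huv : u ≠ v), f (pr huv) = u →
          c - Pi.single u 1 + Pi.single v 1 ∈ C := by
        intro u v huv hfu
        rw [hC]
        refine ⟨Function.update f (pr huv) v, ?_, ?_⟩
        · intro e
          by_cases he : e = pr huv
          · subst he
            rw [Function.update_self]
            rcases pr_val huv with hv | hv <;> rw [hv] <;> [exact Or.inr rfl; exact Or.inl rfl]
          · rw [Function.update_of_ne he]
            exact hf e
        · rw [sum_update, ← hcf, hfu]
      have hy1 := mkC a b hab h1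
      have hy2 := mkC b c' hbc h2
      have hy3 := mkC c' a hca h3
      have hm : (1/2 : ℝ) • (c - Pi.single b 1 + Pi.single c' 1)
          + (1/2 : ℝ) • (c - Pi.single c' 1 + Pi.single a 1) ∈ convexHull ℝ (C + Q) :=
        (convex_convexHull ℝ _) (subset_convexHull ℝ _ (hCS hy2))
          (subset_convexHull ℝ _ (hCS hy3)) (by norm_num) (by norm_num) (by norm_num)
      have hseg : c ∈ openSegment ℝ (c - Pi.single a 1 + Pi.single b 1)
          ((1/2 : ℝ) • (c - Pi.single b 1 + Pi.single c' 1)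
            + (1/2 : ℝ) • (c - Pi.single c' 1 + Pi.single a 1)) := by
        refine ⟨1/3, 2/3, by norm_num, by norm_num, by norm_num, ?_⟩
        funext i
        simp only [Pi.add_apply, Pi.sub_apply, Pi.smul_apply, smul_eq_mul]
        ring
      have hflip := (hx.2 _ (subset_convexHull ℝ _ (hCS hy1)) _ hm hseg).1
      have heva := congrFun hflip a
      simp only [Pi.add_apply, Pi.sub_apply] at heva
      rw [Pi.single_eq_same, Pi.single_eq_of_ne hab] at heva
      linarith
    have hstrict : ∀ {i j : Fin n} (hij : i ≠ j), f (pr hij) = i → deg f j < deg f i :=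
      fun hij hfij => N_ssubset f hf H hij hfij
    have hinj : Function.Injective (fun i : Fin n => (⟨deg f i, deg_lt f hf i⟩ : Fin n)) := by
      intro i j hdeq
      by_contra hij
      have hde : deg f i = deg f j := by
        simpa using congrArg Fin.val hdeq
      rcases f_pr_or f hf hij with h | h
      · exact absurd hde (Nat.ne_of_gt (hstrict hij h))
      · have h' : f (pr (Ne.symm hij)) = j := by rw [← pr_symm hij]; exact h
        exact absurd hde (Nat.ne_of_lt (hstrict (Ne.symm hij) h'))
    let τ : Fin n ≃ Fin n := Equiv.ofBijective _ (Finite.injective_iff_bijective.mp hinj)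
    refine ⟨τ.trans Fin.revPerm, funext fun i => ?_⟩
    have hxi : c i = (deg f i : ℝ) := by rw [hcf]; exact sum_single_apply f i
    have hτ : ((τ.trans Fin.revPerm) i : ℕ) = n - (deg f i + 1) := by
      simp [τ, Equiv.trans_apply, Fin.val_rev, Equiv.ofBijective_apply]
    have h1 : deg f i < n := deg_lt f hf i
    rw [hxi, hτ]
    have h2 : deg f i + 1 ≤ n := h1
    push_cast [h2]
    ring
  · rintro ⟨σ, rfl⟩
    set v : Fin n → ℝ := fun i => (((n : ℤ) - 1 - (σ i : ℕ)) : ℝ) with hvdef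
    set w : Fin n → ℝ := fun i => (σ i : ℝ) + 1 with hwdef
    set ℓ : (Fin n → ℝ) →ₗ[ℝ] ℝ :=
      ∑ i, w i • (LinearMap.proj i : (Fin n → ℝ) →ₗ[ℝ] ℝ) with hldef
    have hℓ : ∀ y : Fin n → ℝ, ℓ y = ∑ i, w i * y i := by
      intro y
      simp [hldef, LinearMap.sum_apply, LinearMap.smul_apply, LinearMap.proj_apply, smul_eq_mul]
    have hwpos : ∀ i, 0 < w i := fun i => by
      simp only [hwdef]
      positivity
    have hℓsingle : ∀ j : Fin n, ℓ (Pi.single j (1:ℝ)) = w j := by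
      intro j
      rw [hℓ]
      have hterm : ∀ i : Fin n, w i * (Pi.single j (1:ℝ) : Fin n → ℝ) i
          = if i = j then w i else 0 := by
        intro i
        simp [Pi.single_apply]
      rw [Finset.sum_congr rfl fun i _ => hterm i, Finset.sum_ite_eq' Finset.univ j w]
      simp
    have hℓC : ∀ f : Pr n → Fin n,
        ℓ (∑ e : Pr n, Pi.single (f e) (1:ℝ)) = ∑ e : Pr n, w (f e) := by
      intro f
      rw [map_sum]
      exact Finset.sum_congr rfl fun e _ => hℓsingle (f e)
    have hvsum : v = ∑ e : Pr n, Pi.single (fperm σ e) (1:ℝ) := by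
      funext i
      rw [sum_single_apply (fperm σ) i, deg_fperm σ i]
      simp only [hvdef]
      have h1 : (σ i : ℕ) < n := (σ i).isLt
      have h2 : (σ i : ℕ) ≤ n - 1 := by omega
      have h3 : 1 ≤ n := by omega
      push_cast [h2, h3]
      ring
    have hterm : ∀ (f : Pr n → Fin n), (∀ e : Pr n, f e = e.1.1 ∨ f e = e.1.2) →
        ∀ e : Pr n, w (fperm σ e) ≤ w (f e) := by
      intro f hf e
      rcases hf e with h | h <;> rw [h] <;> unfold fperm <;> split_ifs with hcmp
      · exact le_refl _
      · have hle : (σ (e.1.2) : ℝ) ≤ σ (e.1.1) := by exact_mod_cast (not_lt.mp hcmp)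
        simp only [hwdef]
        linarith
      · have hle : (σ (e.1.1) : ℝ) ≤ σ (e.1.2) := by exact_mod_cast (le_of_lt hcmp)
        simp only [hwdef]
        linarith
      · exact le_refl _
    have hwinj : Function.Injective w := by
      intro a b hab
      simp only [hwdef] at hab
      have h1 : (σ a : ℕ) = (σ b : ℕ) := by exact_mod_cast (by linarith : (σ a : ℝ) = σ b)
      exact σ.injective (Fin.val_injective h1)
    have claimC : ∀ c ∈ C, ℓ v ≤ ℓ c ∧ (ℓ c = ℓ v → c = v) := by
      intro c hc
      rw [hC] at hc
      obtain ⟨f, hf, rfl⟩ := hc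
      rw [hvsum, hℓC f, hℓC (fperm σ)]
      constructor
      · exact Finset.sum_le_sum fun e _ => hterm f hf e
      · intro heq
        have hall := (Finset.sum_eq_sum_iff_of_le fun e _ => hterm f hf e).mp heq.symm
        refine Finset.sum_congr rfl fun e _ => ?_
        rw [hwinj (hall e (Finset.mem_univ e))]
    have hQnn : ∀ q ∈ Q, 0 ≤ ℓ q ∧ (ℓ q = 0 → q = 0) := by
      intro q hq
      rw [hℓ]
      constructor
      · exact Finset.sum_nonneg fun i _ => mul_nonneg (hwpos i).le (hq i)
      · intro h0
        have hz := (Finset.sum_eq_zero_iff_of_nonneg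
          (fun i _ => mul_nonneg (hwpos i).le (hq i))).mp h0
        funext i
        have hi := hz i (Finset.mem_univ i)
        rcases mul_eq_zero.mp hi with h | h
        · exact absurd h (ne_of_gt (hwpos i))
        · simpa using h
    set G : Set (Fin n → ℝ) := {y | ℓ v ≤ ℓ y ∧ (ℓ y = ℓ v → y = v)} with hGdef
    have hSG : C + Q ⊆ G := by
      rintro y hy
      rw [Set.mem_add] at hy
      obtain ⟨c, hc, q, hq, rfl⟩ := hy
      have h1 := claimC c hc
      have h2 := hQnn q hq
      have hadd : ℓ (c + q) = ℓ c + ℓ q := map_add ℓ c q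
      constructor
      · rw [hadd]; linarith [h1.1, h2.1]
      · intro heq
        rw [hadd] at heq
        have hq0 : ℓ q = 0 := by linarith [h1.1, h2.1]
        have hc0 : ℓ c = ℓ v := by linarith [h2.1]
        rw [h2.2 hq0, h1.2 hc0, add_zero]
    have hGconv : Convex ℝ G := by
      rintro y hy z hz a b ha hb hab
      have hcomb : ℓ (a • y + b • z) = a * ℓ y + b * ℓ z := by
        rw [map_add, map_smul, map_smul, smul_eq_mul, smul_eq_mul]
      have hvv : a * ℓ v + b * ℓ v = ℓ v := by rw [← add_mul, hab, one_mul]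
      constructor
      · rw [hcomb]
        have h3 := mul_le_mul_of_nonneg_left hy.1 ha
        have h4 := mul_le_mul_of_nonneg_left hz.1 hb
        linarith
      · intro heq
        rw [hcomb] at heq
        rcases eq_or_lt_of_le ha with ha0 | ha0
        · have hb1 : b = 1 := by linarith
          have hzv : z = v := hz.2 (by rw [← ha0, hb1] at heq; linarith)
          rw [hzv, ← ha0, hb1]
          simp
        · rcases eq_or_lt_of_le hb with hb0 | hb0
          · have ha1 : a = 1 := by linarith
            have hyv : y = v := hy.2 (by rw [← hb0, ha1] at heq; linarith)
            rw [hyv, ← hb0, ha1]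
            simp
          · have h3 : a * ℓ v ≤ a * ℓ y := mul_le_mul_of_nonneg_left hy.1 ha
            have h4 : b * ℓ v ≤ b * ℓ z := mul_le_mul_of_nonneg_left hz.1 hb
            have h5 : a * ℓ y ≤ a * ℓ v := by linarith
            have h6 : b * ℓ z ≤ b * ℓ v := by linarith
            have hy1 : ℓ y = ℓ v := le_antisymm (le_of_mul_le_mul_left h5 ha0) hy.1
            have hz1 : ℓ z = ℓ v := le_antisymm (le_of_mul_le_mul_left h6 hb0) hz.1
            rw [hy.2 hy1, hz.2 hz1, ← add_smul, hab, one_smul]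
    have hsub : convexHull ℝ (C + Q) ⊆ G := convexHull_min hSG hGconv
    have hvC : v ∈ C := by
      rw [hC]
      exact ⟨fperm σ, fperm_good σ, hvsum⟩
    refine ⟨subset_convexHull ℝ _ (hCS hvC), ?_⟩
    rintro y hy z hz ⟨a, b, ha, hb, hab, hsum⟩
    have hy' := hsub hy
    have hz' := hsub hz
    have hvv : a * ℓ v + b * ℓ v = ℓ v := by rw [← add_mul, hab, one_mul]
    have hcomb : a * ℓ y + b * ℓ z = ℓ v := by
      rw [← smul_eq_mul, ← smul_eq_mul, ← map_smul, ← map_smul, ← map_add, hsum]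
    have h3 : a * ℓ v ≤ a * ℓ y := mul_le_mul_of_nonneg_left hy'.1 ha.le
    have h4 : b * ℓ v ≤ b * ℓ z := mul_le_mul_of_nonneg_left hz'.1 hb.le
    have h5 : a * ℓ y ≤ a * ℓ v := by linarith
    have h6 : b * ℓ z ≤ b * ℓ v := by linarith
    have hy1 : ℓ y = ℓ v := le_antisymm (le_of_mul_le_mul_left h5 ha) hy'.1
    have hz1 : ℓ z = ℓ v := le_antisymm (le_of_mul_le_mul_left h6 hb) hz'.1
    exact ⟨hy'.2 hy1, hz'.2 hz1⟩
end

section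
/- Let v be a point of the cloud C of I_{n,2} = ∏_{i<j}(x_i,x_j) whose associated tournament contains a directed cycle of length m. Then v is a convex combination (with equal weights 1/m) of m other points v^{(1)},...,v^{(m)} of C obtained by reversing one edge of the cycle at a time; hence v is not a vertex of conv(C + ℝ≥0^n). -/
open Pointwise

lemma aux_chain_17 {α : Type*} {r : α → α → Prop} {a b : α} (h : Relation.ReflTransGen r a b) :
    ∃ (m : ℕ) (c : ℕ → α), c 0 = a ∧ c m = b ∧ ∀ k < m, r (c k) (c (k+1)) := by
  induction h using Relation.ReflTransGen.head_induction_on with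
  | refl => exact ⟨0, fun _ => b, rfl, rfl, by omega⟩
  | head h1 h2 ih =>
    rename_i x y
    obtain ⟨m, c, hc0, hcm, hstep⟩ := ih
    refine ⟨m + 1, fun k => if k = 0 then x else c (k - 1), by simp, by simp [hcm], ?_⟩
    intro k hk
    rcases Nat.eq_zero_or_pos k with rfl | hkpos
    · simpa [hc0] using h1
    · obtain ⟨k, rfl⟩ := Nat.exists_eq_add_of_lt hkpos
      simpa using hstep k (by omega)

/-- If a point `v` of the cloud of `I_{n,2} = ∏_{i<j}(xᵢ,xⱼ)` comes from a choice
function (tournament) containing a directed cycle, then `v` is the equal-weight convex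
combination of finitely many other points of the cloud; in particular `v` is not a
vertex of the Newton polyhedron. -/
theorem stmt_17 {n : ℕ}
    (C : Set (Fin n → ℝ))
    (hC : C = {x | ∃ g : Fin n → Fin n → Fin n,
      (∀ i j, i ≠ j → (g i j = i ∨ g i j = j)) ∧ (∀ i j, g i j = g j i) ∧
      x = ∑ p : {p : Fin n × Fin n // p.1 < p.2}, Pi.single (g p.val.1 p.val.2) (1 : ℝ)})
    (f : Fin n → Fin n → Fin n)
    (hf : ∀ i j, i ≠ j → (f i j = i ∨ f i j = j)) (hfsymm : ∀ i j, f i j = f j i)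
    (v : Fin n → ℝ)
    (hv : v = ∑ p : {p : Fin n × Fin n // p.1 < p.2}, Pi.single (f p.val.1 p.val.2) (1 : ℝ))
    (hcyc : ∃ x, Relation.TransGen (fun i j => i ≠ j ∧ f i j = i) x x) :
    (∃ m : ℕ, 0 < m ∧ ∃ w : Fin m → (Fin n → ℝ),
      (∀ i, w i ∈ C ∧ w i ≠ v) ∧ v = (m : ℝ)⁻¹ • ∑ i, w i) ∧
    v ∉ Set.extremePoints ℝ (convexHull ℝ (C + {x : Fin n → ℝ | ∀ i, 0 ≤ x i})) := by
  classical
  -- swap lemma: reversing one edge stays in C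
  have hswap : ∀ i j : Fin n, i ≠ j → f i j = i →
      v + Pi.single j (1:ℝ) - Pi.single i 1 ∈ C := by
    intro i j hij hfij
    rw [hC]
    refine ⟨fun a b => if (a = i ∧ b = j) ∨ (a = j ∧ b = i) then j else f a b, ?_, ?_, ?_⟩
    · intro a b hab
      by_cases h : (a = i ∧ b = j) ∨ (a = j ∧ b = i)
      · rcases h with ⟨rfl, rfl⟩ | ⟨rfl, rfl⟩ <;> simp
      · simp only [if_neg h]; exact hf a b hab
    · intro a b
      by_cases h : (a = i ∧ b = j) ∨ (a = j ∧ b = i)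
      · have h' : (b = i ∧ a = j) ∨ (b = j ∧ a = i) := by tauto
        simp [h, h']
      · have h' : ¬((b = i ∧ a = j) ∨ (b = j ∧ a = i)) := by tauto
        simp only [if_neg h, if_neg h']
        exact hfsymm a b
    · -- sum identity
      set p₀ : {p : Fin n × Fin n // p.1 < p.2} :=
        if h : i < j then ⟨(i, j), h⟩ else ⟨(j, i), lt_of_le_of_ne (not_lt.1 h) hij.symm⟩
      have key : ∑ p : {p : Fin n × Fin n // p.1 < p.2},
          ((Pi.single (if (p.val.1 = i ∧ p.val.2 = j) ∨ (p.val.1 = j ∧ p.val.2 = i) then j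
            else f p.val.1 p.val.2) (1:ℝ) : Fin n → ℝ) - Pi.single (f p.val.1 p.val.2) (1:ℝ))
          = Pi.single j 1 - Pi.single i 1 := by
        rw [Finset.sum_eq_single_of_mem p₀ (Finset.mem_univ _)]
        · have hcond : (p₀.val.1 = i ∧ p₀.val.2 = j) ∨ (p₀.val.1 = j ∧ p₀.val.2 = i) := by
            by_cases h : i < j <;> simp [p₀, h]
          have hfp : f p₀.val.1 p₀.val.2 = i := by
            by_cases h : i < j <;> simp only [p₀, dif_pos, dif_neg, h] <;>
              simp [hfij, hfsymm j i ▸ hfij]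
          rw [if_pos hcond, hfp]
        · intro p _ hp
          have hcond : ¬((p.val.1 = i ∧ p.val.2 = j) ∨ (p.val.1 = j ∧ p.val.2 = i)) := by
            rintro (⟨h1, h2⟩ | ⟨h1, h2⟩)
            · have hij' : i < j := by rw [← h1, ← h2]; exact p.2
              apply hp
              apply Subtype.ext
              have : p₀ = ⟨(i, j), hij'⟩ := by simp [p₀, hij']
              rw [this]
              exact Prod.ext h1 h2
            · have hij' : j < i := by rw [← h1, ← h2]; exact p.2
              apply hp
              apply Subtype.ext
              have : p₀ = ⟨(j, i), hij'⟩ := by simp [p₀, not_lt.2 hij'.le]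
              rw [this]
              exact Prod.ext h1 h2
          rw [if_neg hcond, sub_self]
      calc v + Pi.single j (1:ℝ) - Pi.single i 1
          = (∑ p : {p : Fin n × Fin n // p.1 < p.2}, Pi.single (f p.val.1 p.val.2) (1:ℝ))
            + (Pi.single j 1 - Pi.single i 1) := by rw [hv]; ring
        _ = _ := by
            rw [← key, ← Finset.sum_add_distrib]
            refine Finset.sum_congr rfl fun p _ => ?_
            beta_reduce
            abel
  -- extract a closed chain
  obtain ⟨x, hx⟩ := hcyc
  obtain ⟨y, hxy, hyx⟩ := Relation.TransGen.head'_iff.1 hx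
  obtain ⟨m', c', hc0, hcm, hstep'⟩ := aux_chain_17 hyx
  set c : ℕ → Fin n := fun k => if k = 0 then x else c' (k - 1) with hcdef
  set m : ℕ := m' + 1 with hmdef
  have hcm0 : c m = c 0 := by simp [hcdef, hmdef, hcm]
  have hstep : ∀ k < m, c k ≠ c (k+1) ∧ f (c k) (c (k+1)) = c k := by
    intro k hk
    rcases Nat.eq_zero_or_pos k with rfl | hkpos
    · simpa [hcdef, hc0] using hxy
    · obtain ⟨k, rfl⟩ := Nat.exists_eq_add_of_lt hkpos
      simpa [hcdef] using hstep' k (by omega)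
  have hm2 : 2 ≤ m := by
    by_contra h
    have hm1 : m = 1 := by omega
    exact (hstep 0 (by omega)).1 (by rw [show (0:ℕ)+1 = m by omega, hcm0])
  have hm0 : 0 < m := by omega
  -- the points
  set w : Fin m → (Fin n → ℝ) := fun k => v + Pi.single (c (k+1)) 1 - Pi.single (c k) 1 with hwdef
  have hwmem : ∀ k : Fin m, w k ∈ C := fun k =>
    hswap (c k) (c (k+1)) (hstep k k.isLt).1 (hstep k k.isLt).2
  have hwne : ∀ k : Fin m, w k ≠ v := by
    intro k h
    have := congrFun h (c (k+1))
    rw [hwdef] at this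
    simp only [Pi.add_apply, Pi.sub_apply, Pi.single_eq_same,
      Pi.single_eq_of_ne (Ne.symm (hstep k k.isLt).1)] at this
    linarith
  have hwsum : ∑ k : Fin m, w k = (m : ℕ) • v := by
    rw [hwdef]
    have : ∑ k : Fin m, (v + (Pi.single (c (k+1)) (1:ℝ) : Fin n → ℝ) - Pi.single (c k) 1)
        = (m : ℕ) • v + ∑ k : Fin m, ((Pi.single (c (k+1)) (1:ℝ) : Fin n → ℝ) - Pi.single (c k) 1) := by
      simp only [add_sub_assoc]
      rw [Finset.sum_add_distrib, Finset.sum_const, Finset.card_univ, Fintype.card_fin]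
    rw [show (fun k : Fin m => v + (Pi.single (c (↑k+1)) (1:ℝ) : Fin n → ℝ) - Pi.single (c ↑k) 1)
      = fun k : Fin m => v + (Pi.single (c (↑k+1)) (1:ℝ) : Fin n → ℝ) - Pi.single (c ↑k) 1 from rfl, this]
    have htel : ∑ k : Fin m, ((Pi.single (c (↑k+1)) (1:ℝ) : Fin n → ℝ) - Pi.single (c ↑k) 1) = 0 := by
      have heq : ∑ k : Fin m, ((Pi.single (c (↑k+1)) (1:ℝ) : Fin n → ℝ) - Pi.single (c ↑k) 1)
          = ∑ k ∈ Finset.range m, ((Pi.single (c (k+1)) (1:ℝ) : Fin n → ℝ) - Pi.single (c k) 1) :=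
        Fin.sum_univ_eq_sum_range (fun k : ℕ => (Pi.single (c (k+1)) (1:ℝ) : Fin n → ℝ) - Pi.single (c k) 1) m
      rw [heq, Finset.sum_range_sub (fun k : ℕ => (Pi.single (c k) (1:ℝ) : Fin n → ℝ)), hcm0, sub_self]
    rw [htel, add_zero]
  have hveq : v = (m : ℝ)⁻¹ • ∑ k, w k := by
    rw [hwsum, ← Nat.cast_smul_eq_nsmul ℝ, smul_smul,
      inv_mul_cancel₀ (by exact_mod_cast hm0.ne'), one_smul]
  constructor
  · exact ⟨m, hm0, w, fun k => ⟨hwmem k, hwne k⟩, hveq⟩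
  · intro hext
    obtain ⟨hvS, hseg⟩ := hext
    have hCS : C ⊆ convexHull ℝ (C + {x : Fin n → ℝ | ∀ i, 0 ≤ x i}) := fun z hz =>
      subset_convexHull ℝ _ ⟨z, hz, 0, fun i => le_refl 0, add_zero z⟩
    have hmR : (0:ℝ) < m := by exact_mod_cast hm0
    have hm2R : (2:ℝ) ≤ m := by exact_mod_cast hm2
    have hmne : (m:ℝ) ≠ 0 := hmR.ne'
    have hm1ne : (m:ℝ) - 1 ≠ 0 := by linarith
    set k0 : Fin m := ⟨0, hm0⟩ with hk0
    set x₂ := ((m : ℝ) - 1)⁻¹ • ∑ k ∈ Finset.univ.erase k0, w k with hx2def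
    have hx₁ : w k0 ∈ convexHull ℝ (C + {x : Fin n → ℝ | ∀ i, 0 ≤ x i}) := hCS (hwmem k0)
    have hx₂ : x₂ ∈ convexHull ℝ (C + {x : Fin n → ℝ | ∀ i, 0 ≤ x i}) := by
      rw [hx2def, Finset.smul_sum]
      refine (convex_convexHull ℝ _).sum_mem (fun k _ => inv_nonneg.2 (by linarith)) ?_
        (fun k _ => hCS (hwmem k))
      rw [Finset.sum_const, Finset.card_erase_of_mem (Finset.mem_univ _), Finset.card_univ,
        Fintype.card_fin, nsmul_eq_mul, Nat.cast_sub hm0, Nat.cast_one]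
      exact mul_inv_cancel₀ hm1ne
    have hsegmem : v ∈ openSegment ℝ (w k0) x₂ := by
      refine ⟨(m:ℝ)⁻¹, 1 - (m:ℝ)⁻¹, by positivity, ?_, by ring, ?_⟩
      · have : (m:ℝ)⁻¹ < 1 := by
          rw [inv_lt_one_iff₀]; right; linarith
        linarith
      · have h1 : ((1 : ℝ) - (m:ℝ)⁻¹) • x₂ = (m:ℝ)⁻¹ • ∑ k ∈ Finset.univ.erase k0, w k := by
          rw [hx2def, smul_smul]
          congr 1
          field_simp
        rw [h1, ← smul_add, Finset.add_sum_erase _ w (Finset.mem_univ _), ← hveq]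
    exact hwne k0 (hseg hx₁ hx₂ hsegmem)
end
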